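/- arXiv:1807.08358 — 6 statements merged into one kernel-verified Lean document; each statement's English description precedes it below -/
import Mathlib

section
/- Let H be a finite group of order 2^n with nilpotency class c ≥ 1, and let N be a normal subgroup of H of order 2 such that the quotient H/N has nilpotency class c − 1 (so that H and H/N have the same coclass). If the automorphism group Aut(H/N) is a 2-group, then Aut(H) is a 2-group. -/
/-- A subgroup contained in a finite subgroup with the same cardinality equals it. -/
lemma subgroup_eq_of_le_of_card_eq_aux {G : Type*} [Group G] {K N : Subgroup G} [Finite N]
    (h : K ≤ N) (hc : Nat.card K = Nat.card N) : K = N := by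
  have h1 : Nat.card (K.subgroupOf N) = Nat.card N := by
    rw [← hc]; exact Nat.card_congr (Subgroup.subgroupOfEquivOfLe h).toEquiv
  have h2 : K.subgroupOf N = ⊤ := Subgroup.eq_top_of_card_eq _ h1
  exact le_antisymm h (Subgroup.subgroupOf_eq_top.mp h2)

/-- The homomorphism `Aut(H) → Aut(H/N)` for a subgroup `N` invariant under all
automorphisms. -/
def autQuotHomAux {H : Type*} [Group H] (N : Subgroup H) [N.Normal]
    (hchar : ∀ φ : H ≃* H, N.map φ.toMonoidHom = N) : MulAut H →* MulAut (H ⧸ N) where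
  toFun φ := QuotientGroup.congr N N φ (hchar φ)
  map_one' := by
    ext x
    induction x using QuotientGroup.induction_on
    rfl
  map_mul' φ ψ := by
    ext x
    induction x using QuotientGroup.induction_on
    rfl

/-- If `H` is a finite `2`-group of nilpotency class `c ≥ 1`, `N` is a normal subgroup of
order `2` such that `H / N` has nilpotency class `c - 1` (so `H` and `H / N` have the same
coclass), and `Aut(H / N)` is a `2`-group, then `Aut(H)` is a `2`-group. -/
theorem aut_isPGroup_of_aut_quotient_isPGroup
    {H : Type*} [Group H] [Finite H] [Group.IsNilpotent H] {n c : ℕ}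
    (hc : 1 ≤ c) (hcard : Nat.card H = 2 ^ n)
    (hclass : Group.nilpotencyClass H = c)
    (N : Subgroup H) [N.Normal] (hN : Nat.card N = 2)
    (hqclass : Group.nilpotencyClass (H ⧸ N) = c - 1)
    (hq : IsPGroup 2 (MulAut (H ⧸ N))) :
    IsPGroup 2 (MulAut H) := by
  classical
  -- Step 1: `lowerCentralSeries H (c-1) = N`, hence `N` is characteristic.
  have hbotQ : Subgroup.lowerCentralSeries (⊤ : Subgroup (H ⧸ N)) (c - 1) = ⊥ := by
    rw [lowerCentralSeries_eq_bot_iff_nilpotencyClass_le, hqclass]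
  have hle : Subgroup.lowerCentralSeries (⊤ : Subgroup H) (c - 1) ≤ N := by
    rw [← QuotientGroup.ker_mk' N, ← Subgroup.map_eq_bot_iff]
    exact le_bot_iff.mp (hbotQ ▸ lowerCentralSeries.map (QuotientGroup.mk' N) (c - 1))
  have hne : Subgroup.lowerCentralSeries (⊤ : Subgroup H) (c - 1) ≠ ⊥ := by
    intro h
    have h2 := lowerCentralSeries_eq_bot_iff_nilpotencyClass_le.mp h
    rw [hclass] at h2
    omega
  have hcard' : Nat.card (Subgroup.lowerCentralSeries (⊤ : Subgroup H) (c - 1)) = 2 := by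
    rcases Nat.prime_two.eq_one_or_self_of_dvd _ (hN ▸ Subgroup.card_dvd_of_le hle) with h | h
    · exact absurd (Subgroup.card_eq_one.mp h) hne
    · exact h
  have hKN : Subgroup.lowerCentralSeries (⊤ : Subgroup H) (c - 1) = N :=
    subgroup_eq_of_le_of_card_eq_aux hle (hcard'.trans hN.symm)
  have hchar : ∀ φ : H ≃* H, N.map φ.toMonoidHom = N := by
    refine Subgroup.characteristic_iff_map_eq.mp
      (Subgroup.characteristic_iff_map_le.mpr fun φ => ?_)
    rw [← hKN]
    exact lowerCentralSeries.map φ.toMonoidHom (c - 1)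
  -- Step 2: elements of `N` square to one and are unique nontrivial.
  obtain ⟨⟨z, hzN⟩, hz1, hzu⟩ := (Nat.card_eq_two_iff' (1 : N)).mp hN
  have hmemcases : ∀ x : N, x = 1 ∨ x = ⟨z, hzN⟩ := by
    intro x
    by_cases hx : x = 1
    · exact Or.inl hx
    · exact Or.inr (hzu x hx)
  have hsq : ∀ x ∈ N, x * x = 1 := by
    intro x hx
    rcases hmemcases ⟨x, hx⟩ with h | h
    · have : x = 1 := congrArg Subtype.val h
      simp [this]
    · have hxz : x = z := congrArg Subtype.val h
      subst hxz
      rcases hmemcases ⟨x * x, N.mul_mem hx hx⟩ with h2 | h2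
      · exact congrArg Subtype.val h2
      · have : x * x = x := congrArg Subtype.val h2
        have hx1 : x = 1 := by
          have := mul_right_cancel (a := x) (b := x) (c := 1) (by simpa using this)
          simpa using this
        exact absurd (Subtype.ext hx1 : (⟨x, hx⟩ : N) = 1) hz1
  -- Step 3: every automorphism fixes `N` pointwise.
  have hfix : ∀ (φ : MulAut H), ∀ x ∈ N, φ x = x := by
    intro φ x hx
    have hφx : φ x ∈ N := by
      rw [← hchar φ]
      exact Subgroup.mem_map_of_mem _ hx
    rcases hmemcases ⟨x, hx⟩ with h | h
    · have : x = 1 := congrArg Subtype.val h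
      simp [this]
    · have hxz : x = z := congrArg Subtype.val h
      have hφx1 : (⟨φ x, hφx⟩ : N) ≠ 1 := by
        intro h1
        have : φ x = 1 := congrArg Subtype.val h1
        have : x = 1 := φ.injective (by simpa using this)
        exact hz1 (Subtype.ext (by simpa [hxz] using this) : (⟨z, hzN⟩ : N) = 1)
      have := hzu _ hφx1
      have : φ x = z := congrArg Subtype.val this
      rw [this, hxz]
  -- Step 4: conclude using the exact sequence.
  set F := autQuotHomAux N hchar with hF
  intro φ
  obtain ⟨k, hk⟩ := hq (F φ)
  refine ⟨k + 1, ?_⟩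
  set ψ := φ ^ 2 ^ k with hψdef
  have hker : F ψ = 1 := by rw [hψdef, map_pow, hk]
  have hmem : ∀ x : H, x⁻¹ * ψ x ∈ N := by
    intro x
    have h1 : ((ψ x : H) : H ⧸ N) = (x : H ⧸ N) := by
      exact MulEquiv.ext_iff.mp hker ((x : H) : H ⧸ N)
    exact QuotientGroup.eq.mp h1.symm
  have hψ2 : ψ * ψ = 1 := by
    ext x
    show ψ (ψ x) = x
    have hmx := hmem x
    calc ψ (ψ x) = ψ (x * (x⁻¹ * ψ x)) := by group
      _ = ψ x * (x⁻¹ * ψ x) := by rw [map_mul, hfix ψ _ hmx]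
      _ = x * ((x⁻¹ * ψ x) * (x⁻¹ * ψ x)) := by group
      _ = x := by rw [hsq _ hmx, mul_one]
  calc φ ^ 2 ^ (k + 1) = (φ ^ 2 ^ k) * (φ ^ 2 ^ k) := by
        rw [pow_succ, pow_mul, sq]
    _ = 1 := hψ2
end

section
/- The automorphism group of Q8 × C2, the direct product of the quaternion group of order 8 with the cyclic group of order 2, is not a 2-group. -/
private def qmap : QuaternionGroup 2 → QuaternionGroup 2
  | .a i => if i = 1 then .xa 0 else if i = 3 then .xa 2 else .a i
  | .xa i => if i = 0 then .xa 3 else if i = 1 then .a 3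
      else if i = 2 then .xa 1 else .a 1

private def qaut : MulAut (QuaternionGroup 2) where
  toFun := qmap
  invFun := qmap ∘ qmap
  left_inv := by decide
  right_inv := by decide
  map_mul' := by decide

private def φ : MulAut (QuaternionGroup 2 × Multiplicative (ZMod 2)) :=
  MulEquiv.prodCongr qaut (MulEquiv.refl _)

/-- The automorphism group of `Q₈ × C₂`, the direct product of the quaternion group of
order `8` with the cyclic group of order `2`, is not a `2`-group. -/
theorem aut_quaternion_times_c2_not_pGroup :
    ¬ IsPGroup 2 (MulAut (QuaternionGroup 2 × Multiplicative (ZMod 2))) := by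
  intro h
  obtain ⟨k, hk⟩ := h φ
  have h3 : φ ^ 3 = 1 := by
    ext x
    · exact (by revert x; decide : ∀ y : QuaternionGroup 2 × Multiplicative (ZMod 2),
        ((φ ^ 3) y).1 = ((1 : MulAut _) y).1) x
    · rfl
  have hφ1 : φ ≠ 1 := by
    intro hcon
    have : φ (⟨.a 1, 1⟩) = ⟨.a 1, 1⟩ := by rw [hcon]; rfl
    exact absurd this (by decide)
  have hd : orderOf φ ∣ 2 ^ k := orderOf_dvd_of_pow_eq_one hk
  have hd3 : orderOf φ ∣ 3 := orderOf_dvd_of_pow_eq_one h3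
  have hcop : Nat.Coprime (orderOf φ) (orderOf φ) := by
    exact Nat.Coprime.coprime_dvd_left hd3 (Nat.Coprime.coprime_dvd_right hd (by
      exact Nat.Coprime.pow_right k (by norm_num)))
  have : orderOf φ = 1 := (Nat.coprime_self _).mp hcop
  exact hφ1 (orderOf_eq_one_iff.mp this)
end

section
/- For every natural number n ≥ 2, the group K_n^1 (obtained from the common relations together with g1² = 1, g2² = g3·t, g5^{g4} = g5) has order 2^{n+6}, nilpotency class n + 3 (hence coclass 3), and its automorphism group Aut(K_n^1) is not a 2-group. -/
/-- Generators `g₁, g₂, g₃, g₄, g₅, t` for the coclass-`3` groups `Kₙⁱ`. -/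
inductive KGen : Type
  | g1 | g2 | g3 | g4 | g5 | t

namespace KGen

def a1 : FreeGroup KGen := FreeGroup.of KGen.g1
def a2 : FreeGroup KGen := FreeGroup.of KGen.g2
def a3 : FreeGroup KGen := FreeGroup.of KGen.g3
def a4 : FreeGroup KGen := FreeGroup.of KGen.g4
def a5 : FreeGroup KGen := FreeGroup.of KGen.g5
def tt : FreeGroup KGen := FreeGroup.of KGen.t

/-- Conjugation `x ^ y = y⁻¹ * x * y`. -/
def cnj (x y : FreeGroup KGen) : FreeGroup KGen := y⁻¹ * x * y

/-- The common relators: `g₂^g₁ = g₂g₃`, `g₃^g₁ = g₃t`, `g₃^g₂ = g₃`, `g₃² = t⁻¹`,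
`g₄^g₁ = g₄`, `g₄^g₂ = g₄`, `g₄^g₃ = g₄`, `g₄² = 1`, `g₅^g₁ = g₅`, `g₅^g₂ = g₅`,
`g₅^g₃ = g₅`, `g₅² = 1`, `t^g₁ = t⁻¹`, `t^g₂ = t`, `t^g₃ = t`, `t^g₄ = t`, `t^g₅ = t`,
`t^(2^(n+1)) = 1`. -/
def commonRels (n : ℕ) : Set (FreeGroup KGen) :=
  {cnj a2 a1 * (a2 * a3)⁻¹,
   cnj a3 a1 * (a3 * tt)⁻¹,
   cnj a3 a2 * a3⁻¹,
   a3 ^ 2 * tt,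
   cnj a4 a1 * a4⁻¹,
   cnj a4 a2 * a4⁻¹,
   cnj a4 a3 * a4⁻¹,
   a4 ^ 2,
   cnj a5 a1 * a5⁻¹,
   cnj a5 a2 * a5⁻¹,
   cnj a5 a3 * a5⁻¹,
   a5 ^ 2,
   cnj tt a1 * tt,
   cnj tt a2 * tt⁻¹,
   cnj tt a3 * tt⁻¹,
   cnj tt a4 * tt⁻¹,
   cnj tt a5 * tt⁻¹,
   tt ^ (2 ^ (n + 1))}

end KGen

open KGen

/-- `Kₙ¹`: common relators together with `g₁² = 1`, `g₂² = g₃t`, `g₅^g₄ = g₅`. -/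
abbrev K1 (n : ℕ) : Type :=
  PresentedGroup (commonRels n ∪
    {a1 ^ 2, a2 ^ 2 * (a3 * tt)⁻¹, cnj a5 a4 * a5⁻¹})

/-- `Kₙ²`: common relators together with `g₁² = 1`, `g₂² = g₃t^(1+2^n)`, `g₅^g₄ = g₅`. -/
abbrev K2 (n : ℕ) : Type :=
  PresentedGroup (commonRels n ∪
    {a1 ^ 2, a2 ^ 2 * (a3 * tt ^ (1 + 2 ^ n))⁻¹, cnj a5 a4 * a5⁻¹})

/-- `Kₙ³`: common relators together with `g₁² = t^(2^n)`, `g₂² = g₃t`, `g₅^g₄ = g₅`. -/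
abbrev K3 (n : ℕ) : Type :=
  PresentedGroup (commonRels n ∪
    {a1 ^ 2 * (tt ^ (2 ^ n))⁻¹, a2 ^ 2 * (a3 * tt)⁻¹, cnj a5 a4 * a5⁻¹})

/-- `Kₙ⁴`: common relators together with `g₁² = 1`, `g₂² = g₃t`, `g₅^g₄ = g₅t^(2^n)`. -/
abbrev K4 (n : ℕ) : Type :=
  PresentedGroup (commonRels n ∪
    {a1 ^ 2, a2 ^ 2 * (a3 * tt)⁻¹, cnj a5 a4 * (a5 * tt ^ (2 ^ n))⁻¹})

/-- `Kₙ⁵`: common relators together with `g₁² = 1`, `g₂² = g₃t^(1+2^n)`,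
`g₅^g₄ = g₅t^(2^n)`. -/
abbrev K5 (n : ℕ) : Type :=
  PresentedGroup (commonRels n ∪
    {a1 ^ 2, a2 ^ 2 * (a3 * tt ^ (1 + 2 ^ n))⁻¹, cnj a5 a4 * (a5 * tt ^ (2 ^ n))⁻¹})

/-- `Kₙ⁶`: common relators together with `g₁² = t^(2^n)`, `g₂² = g₃t`,
`g₅^g₄ = g₅t^(2^n)`. -/
abbrev K6 (n : ℕ) : Type :=
  PresentedGroup (commonRels n ∪
    {a1 ^ 2 * (tt ^ (2 ^ n))⁻¹, a2 ^ 2 * (a3 * tt)⁻¹, cnj a5 a4 * (a5 * tt ^ (2 ^ n))⁻¹})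

open DihedralGroup Subgroup
open scoped commutatorElement

section Gen
variable {G H : Type*} [Group G] [Group H]

theorem lcsMap (e : G ≃* H) : ∀ k, ((⊤ : Subgroup G).lowerCentralSeries k).map e.toMonoidHom = (⊤ : Subgroup H).lowerCentralSeries k
  | 0 => by
      rw [Subgroup.lowerCentralSeries_zero, Subgroup.lowerCentralSeries_zero, ← MonoidHom.range_eq_map,
        MonoidHom.range_eq_top]
      exact e.surjective
  | (k+1) => by
      show Subgroup.map _ ⁅(⊤ : Subgroup G).lowerCentralSeries k, ⊤⁆ = ⁅(⊤ : Subgroup H).lowerCentralSeries k, ⊤⁆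
      rw [Subgroup.map_commutator, lcsMap e k]
      congr 1
      rw [← MonoidHom.range_eq_map, MonoidHom.range_eq_top]
      exact e.surjective

theorem lcsBotIff (e : G ≃* H) (k : ℕ) :
    (⊤ : Subgroup G).lowerCentralSeries k = ⊥ ↔ (⊤ : Subgroup H).lowerCentralSeries k = ⊥ := by
  rw [← lcsMap e k]
  constructor
  · rintro h; rw [h, Subgroup.map_bot]
  · intro h
    have := Subgroup.map_injective (f := e.toMonoidHom) e.injective
    rw [← Subgroup.map_bot e.toMonoidHom] at h
    exact this h

theorem lcsProd : ∀ k, (⊤ : Subgroup (G × H)).lowerCentralSeries k =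
    ((⊤ : Subgroup G).lowerCentralSeries k).prod ((⊤ : Subgroup H).lowerCentralSeries k)
  | 0 => (Subgroup.top_prod_top).symm
  | (k+1) => by
      show ⁅(⊤ : Subgroup (G × H)).lowerCentralSeries k, ⊤⁆ = _
      rw [lcsProd k, ← Subgroup.top_prod_top, Subgroup.commutator_prod_prod]
      rfl

theorem lcsComm {A : Type*} [CommGroup A] {k : ℕ} (hk : 1 ≤ k) :
    (⊤ : Subgroup A).lowerCentralSeries k = ⊥ := by
  have h1 : (⊤ : Subgroup A).lowerCentralSeries 1 = ⊥ := by
    rw [Subgroup.top_lowerCentralSeries_one, commutator_def, eq_bot_iff, Subgroup.commutator_le]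
    intro g _ h _
    rw [Subgroup.mem_bot]
    exact commutatorElement_eq_one_iff_mul_comm.mpr (mul_comm g h)
  exact le_bot_iff.mp (h1 ▸ Subgroup.lowerCentralSeries_antitone ⊤ hk)
end Gen

section Dih
variable {m : ℕ}

@[simp] theorem dinv_r (i : ZMod m) : (r i)⁻¹ = r (-i) := rfl
@[simp] theorem dinv_sr (i : ZMod m) : (sr i)⁻¹ = sr i := rfl

theorem r_pow (c : ZMod m) (k : ℕ) : (r c) ^ k = r ((k : ZMod m) * c) := by
  induction k with
  | zero => simp [one_def, -r_zero]
  | succ k ih =>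
      rw [pow_succ, ih, r_mul_r]
      congr 1
      push_cast
      ring

theorem r_zpow (c : ZMod m) (z : ℤ) : (r c) ^ z = r ((z : ZMod m) * c) := by
  cases z with
  | ofNat k => rw [Int.ofNat_eq_coe, zpow_natCast, _root_.r_pow]; norm_num
  | negSucc k =>
      rw [zpow_negSucc, _root_.r_pow, dinv_r]
      congr 1
      push_cast
      ring

theorem comm_r_r (i j : ZMod m) : ⁅r i, r j⁆ = 1 := by
  rw [commutatorElement_def]
  simp [one_def, -r_zero]

theorem comm_r_sr (i j : ZMod m) : ⁅r i, sr j⁆ = r (2 * i) := by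
  rw [commutatorElement_def]
  simp
  ring

theorem comm_sr_r (i j : ZMod m) : ⁅sr i, r j⁆ = r (-(2 * j)) := by
  rw [commutatorElement_def]
  simp
  ring

theorem comm_sr_sr (i j : ZMod m) : ⁅sr i, sr j⁆ = r (2 * (j - i)) := by
  rw [commutatorElement_def]
  simp
  ring

theorem commutator_zpowers_top (c : ZMod m) :
    ⁅zpowers (r c), (⊤ : Subgroup (DihedralGroup m))⁆ = zpowers (r (2 * c)) := by
  apply le_antisymm
  · rw [Subgroup.commutator_le]
    rintro g₁ hg₁ g₂ -
    obtain ⟨z, rfl⟩ := Subgroup.mem_zpowers_iff.mp hg₁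
    rw [_root_.r_zpow]
    rcases g₂ with j | j
    · rw [comm_r_r]; exact one_mem _
    · rw [comm_r_sr]
      refine Subgroup.mem_zpowers_iff.mpr ⟨z, ?_⟩
      rw [_root_.r_zpow]; congr 1; ring
  · rw [Subgroup.zpowers_le]
    have h : r (2 * c) = ⁅r c, sr 0⁆ := (comm_r_sr c 0).symm
    rw [h]
    exact Subgroup.commutator_mem_commutator (Subgroup.mem_zpowers _) (Subgroup.mem_top _)

theorem commutator_top_top [NeZero m] :
    ⁅(⊤ : Subgroup (DihedralGroup m)), ⊤⁆ = zpowers (r (2 : ZMod m)) := by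
  apply le_antisymm
  · rw [Subgroup.commutator_le]
    rintro (i|i) - (j|j) -
    · rw [comm_r_r]; exact one_mem _
    · rw [comm_r_sr]
      refine Subgroup.mem_zpowers_iff.mpr ⟨(i.val : ℤ), ?_⟩
      rw [_root_.r_zpow]
      congr 1
      push_cast [ZMod.natCast_val, ZMod.cast_id]
      ring
    · rw [comm_sr_r]
      refine Subgroup.mem_zpowers_iff.mpr ⟨-(j.val : ℤ), ?_⟩
      rw [_root_.r_zpow]
      congr 1
      push_cast [ZMod.natCast_val, ZMod.cast_id]
      ring
    · rw [comm_sr_sr]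
      refine Subgroup.mem_zpowers_iff.mpr ⟨(j.val : ℤ) - (i.val : ℤ), ?_⟩
      rw [_root_.r_zpow]
      congr 1
      push_cast [ZMod.natCast_val, ZMod.cast_id]
      ring
  · rw [Subgroup.zpowers_le]
    have h : (r (2 : ZMod m) : DihedralGroup m) = ⁅r (1 : ZMod m), sr (0 : ZMod m)⁆ := by rw [comm_r_sr]; norm_num
    rw [h]
    exact Subgroup.commutator_mem_commutator (Subgroup.mem_top _) (Subgroup.mem_top _)

theorem dihedral_lcs [NeZero m] (k : ℕ) (hk : 1 ≤ k) :
    (⊤ : Subgroup (DihedralGroup m)).lowerCentralSeries k = zpowers (r ((2 : ZMod m) ^ k)) := by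
  induction k, hk using Nat.le_induction with
  | base =>
      rw [Subgroup.top_lowerCentralSeries_one, commutator_def, commutator_top_top, pow_one]
  | succ k hk ih =>
      show ⁅(⊤ : Subgroup (DihedralGroup m)).lowerCentralSeries k, ⊤⁆ = _
      rw [ih, commutator_zpowers_top]
      congr 2
      ring
end Dih

section Lift
variable {H : Type*} [Group H] {q : ℕ} [NeZero q]

theorem zpow_val_cast {x : H} (hx : x ^ q = 1) (z : ℤ) :
    x ^ (((z : ZMod q)).val : ℤ) = x ^ z := by
  rw [ZMod.val_intCast]
  exact (zpow_eq_zpow_emod' z hx).symm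

theorem pow_val_add {x : H} (hx : x ^ q = 1) (i j : ZMod q) :
    x ^ (((i + j)).val : ℤ) = x ^ ((i.val : ℤ)) * x ^ ((j.val : ℤ)) := by
  have h : i + j = (((i.val : ℤ) + (j.val : ℤ) : ℤ) : ZMod q) := by
    push_cast
    simp [ZMod.natCast_val, ZMod.cast_id]
  rw [h, zpow_val_cast hx, zpow_add]

theorem zpow_val_sub {x : H} (hx : x ^ q = 1) (i j : ZMod q) :
    x ^ (((i - j)).val : ℤ) = x ^ ((i.val : ℤ)) * (x ^ ((j.val : ℤ)))⁻¹ := by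
  have h : i - j = (((i.val : ℤ) - (j.val : ℤ) : ℤ) : ZMod q) := by
    push_cast
    simp [ZMod.natCast_val, ZMod.cast_id]
  rw [h, zpow_val_cast hx, zpow_sub]

/-- Lift to a dihedral group hom. -/
def dihedralLift (x y : H) (hx : x ^ q = 1) (hxy : y⁻¹ * x * y = x⁻¹) (hy : y * y = 1) :
    DihedralGroup q →* H where
  toFun := fun d => match d with
    | r i => x ^ ((i.val : ℤ))
    | sr i => y * x ^ ((i.val : ℤ))
  map_one' := by
    show x ^ (((0 : ZMod q)).val : ℤ) = 1
    simp [ZMod.val_zero]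
  map_mul' := by
    have hc : ∀ z : ℤ, x ^ z * y = y * x ^ (-z) := by
      intro z
      have h1 : y⁻¹ * x ^ z * y = x ^ (-z) := by
        have := map_zpow (MulAut.conj y⁻¹) x z
        simp only [MulAut.conj_apply, inv_inv] at this
        rw [hxy] at this
        rw [this, inv_zpow, zpow_neg]
      calc x ^ z * y = y * (y⁻¹ * x ^ z * y) := by group
      _ = y * x ^ (-z) := by rw [h1]
    rintro (i | i) (j | j)
    · show x ^ (((i + j)).val : ℤ) = x ^ ((i.val : ℤ)) * x ^ ((j.val : ℤ))
      exact pow_val_add hx i j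
    · show y * x ^ (((j - i)).val : ℤ) = x ^ ((i.val : ℤ)) * (y * x ^ ((j.val : ℤ)))
      rw [zpow_val_sub hx, ← mul_assoc, ← mul_assoc, hc, zpow_neg]
      group
    · show y * x ^ (((i + j)).val : ℤ) = (y * x ^ ((i.val : ℤ))) * x ^ ((j.val : ℤ))
      rw [pow_val_add hx, mul_assoc]
    · show x ^ (((j - i)).val : ℤ) = (y * x ^ ((i.val : ℤ))) * (y * x ^ ((j.val : ℤ)))
      rw [zpow_val_sub hx]
      rw [mul_assoc, ← mul_assoc (x ^ ((i.val : ℤ))), hc, zpow_neg]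
      calc x ^ ((j.val : ℤ)) * (x ^ ((i.val : ℤ)))⁻¹
          = (y * y) * (x ^ ((i.val : ℤ)))⁻¹ * x ^ ((j.val : ℤ)) := by rw [hy]; group
        _ = y * (y * (x ^ ((i.val : ℤ)))⁻¹ * x ^ ((j.val : ℤ))) := by group

@[simp] theorem dihedralLift_r (x y : H) (hx) (hxy) (hy) (i : ZMod q) :
    dihedralLift x y hx hxy hy (r i) = x ^ ((i.val : ℤ)) := rfl

@[simp] theorem dihedralLift_sr (x y : H) (hx) (hxy) (hy) (i : ZMod q) :
    dihedralLift x y hx hxy hy (sr i) = y * x ^ ((i.val : ℤ)) := rfl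

/-- Lift to a hom on the Klein four-group. -/
def klein4Lift (u v : H) (hu : u ^ (2 : ℕ) = 1) (hv : v ^ (2 : ℕ) = 1) (huv : Commute u v) :
    Multiplicative (ZMod 2 × ZMod 2) →* H where
  toFun a := u ^ (((Multiplicative.toAdd a).1.val : ℤ)) * v ^ (((Multiplicative.toAdd a).2.val : ℤ))
  map_one' := by
    show u ^ (((0 : ZMod 2)).val : ℤ) * v ^ (((0 : ZMod 2)).val : ℤ) = 1
    simp [ZMod.val_zero]
  map_mul' a b := by
    show u ^ ((((Multiplicative.toAdd a).1 + (Multiplicative.toAdd b).1)).val : ℤ) *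
        v ^ ((((Multiplicative.toAdd a).2 + (Multiplicative.toAdd b).2)).val : ℤ) = _
    rw [pow_val_add hu, pow_val_add hv]
    exact (huv.zpow_zpow _ _).mul_mul_mul_comm _ _

@[simp] theorem klein4Lift_apply (u v : H) (hu) (hv) (huv) (a : ZMod 2 × ZMod 2) :
    klein4Lift u v hu hv huv (Multiplicative.ofAdd a) =
      u ^ ((a.1.val : ℤ)) * v ^ ((a.2.val : ℤ)) := rfl

end Lift
open DihedralGroup Subgroup
namespace K1Iso
open KGen

instance (n : ℕ) : NeZero (2 ^ (n + 3)) := ⟨by positivity⟩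
instance (n : ℕ) : Fact (1 < 2 ^ (n + 3)) := ⟨by
  calc 1 < 2 ^ 3 := by norm_num
  _ ≤ 2 ^ (n + 3) := Nat.pow_le_pow_right (by norm_num) (by omega)⟩

abbrev GG (n : ℕ) : Type := DihedralGroup (2 ^ (n + 3)) × Multiplicative (ZMod 2 × ZMod 2)

def fK (n : ℕ) : KGen → GG n
  | .g1 => (sr 0, 1)
  | .g2 => (r 1, 1)
  | .g3 => (r (-2), 1)
  | .g4 => (1, Multiplicative.ofAdd (1, 0))
  | .g5 => (1, Multiplicative.ofAdd (0, 1))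
  | .t  => (r 4, 1)

abbrev K1R (n : ℕ) : Set (FreeGroup KGen) :=
  commonRels n ∪ {a1 ^ 2, a2 ^ 2 * (a3 * tt)⁻¹, cnj a5 a4 * a5⁻¹}

example (n : ℕ) : K1 n = PresentedGroup (K1R n) := rfl

theorem fK_rels (n : ℕ) : ∀ w ∈ K1R n, FreeGroup.lift (fK n) w = 1 := by
  intro w hw
  simp only [K1R, commonRels, Set.mem_union, Set.mem_insert_iff, Set.mem_singleton_iff] at hw
  rcases hw with (rfl|rfl|rfl|rfl|rfl|rfl|rfl|rfl|rfl|rfl|rfl|rfl|rfl|rfl|rfl|rfl|rfl|rfl)|(rfl|rfl|rfl) <;>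
    simp only [cnj, a1, a2, a3, a4, a5, tt, map_mul, map_inv, map_pow, FreeGroup.lift_apply_of, fK,
      Prod.pow_mk, Prod.mk_mul_mk, Prod.inv_mk, one_pow, mul_one, one_mul, inv_one] <;>
    refine Prod.mk_eq_one.mpr ⟨?_, by decide⟩ <;>
    simp only [pow_two, dinv_r, dinv_sr, r_mul_r, r_mul_sr, sr_mul_r, sr_mul_sr, _root_.r_pow, one_def,
      inv_one] <;>
    first
      | rfl
      | (congr 1; push_cast; ring1)
      | (congr 1
         calc ((2 ^ (n + 1) : ℕ) : ZMod (2 ^ (n + 3))) * 4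
             = ((2 ^ (n + 1) * 4 : ℕ) : ZMod (2 ^ (n + 3))) := by push_cast; ring
           _ = (((2 ^ (n + 3) : ℕ) : ZMod (2 ^ (n + 3)))) := congrArg _ (by ring1)
           _ = 0 := ZMod.natCast_self _)

noncomputable def phi (n : ℕ) : K1 n →* GG n := PresentedGroup.toGroup (fK_rels n)

abbrev gen (n : ℕ) (g : KGen) : K1 n := PresentedGroup.mk (K1R n) (FreeGroup.of g)

theorem phi_gen (n : ℕ) (g : KGen) : phi n (gen n g) = fK n g := PresentedGroup.toGroup.of _

theorem rel_one (n : ℕ) {w : FreeGroup KGen} (hw : w ∈ K1R n) :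
    PresentedGroup.mk (K1R n) w = (1 : K1 n) :=
  (QuotientGroup.eq_one_iff _).mpr (Subgroup.subset_normalClosure hw)

theorem commute_of_conj {G : Type*} [Group G] {a b : G} (h : b⁻¹ * a * b * a⁻¹ = 1) :
    Commute a b := by
  rw [mul_inv_eq_one] at h
  unfold Commute SemiconjBy
  calc a * b = b * (b⁻¹ * a * b) := by group
  _ = b * a := by rw [h]

theorem gam3_eq (n : ℕ) : gen n .g3 = (gen n .g2) ^ (-2 : ℤ) := by
  have h4 : (gen n .g3) ^ 2 * gen n .t = 1 := by
    simpa [a3, tt, map_mul, map_pow] using rel_one n (show a3 ^ 2 * tt ∈ K1R n from Set.mem_union_left _ (Set.mem_insert_of_mem _ (Set.mem_insert_of_mem _ (Set.mem_insert_of_mem _ (Set.mem_insert _ _)))))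
  have hx2 : (gen n .g2) ^ 2 * (gen n .g3 * gen n .t)⁻¹ = 1 := by
    simpa [a2, a3, tt, map_mul, map_pow, map_inv] using
      rel_one n (show a2 ^ 2 * (a3 * tt)⁻¹ ∈ K1R n from Set.mem_union_right _ (Set.mem_insert_of_mem _ (Set.mem_insert _ _)))
  have ht : gen n .t = ((gen n .g3) ^ 2)⁻¹ := eq_inv_of_mul_eq_one_right h4
  rw [mul_inv_eq_one] at hx2
  rw [ht] at hx2
  have h22 : (gen n .g2) ^ 2 = (gen n .g3)⁻¹ := by rw [hx2]; group
  have h3 : gen n .g3 = ((gen n .g2) ^ 2)⁻¹ := by rw [h22, inv_inv]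
  rw [h3]; group

theorem tau_eq (n : ℕ) : gen n .t = (gen n .g2) ^ (4 : ℤ) := by
  have h4 : (gen n .g3) ^ 2 * gen n .t = 1 := by
    simpa [a3, tt, map_mul, map_pow] using rel_one n (show a3 ^ 2 * tt ∈ K1R n from Set.mem_union_left _ (Set.mem_insert_of_mem _ (Set.mem_insert_of_mem _ (Set.mem_insert_of_mem _ (Set.mem_insert _ _)))))
  have ht : gen n .t = ((gen n .g3) ^ 2)⁻¹ := eq_inv_of_mul_eq_one_right h4
  rw [ht, gam3_eq]; group

theorem x_ord (n : ℕ) : (gen n .g2) ^ ((2 : ℕ) ^ (n + 3)) = 1 := by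
  have hto : (gen n .t) ^ ((2 : ℕ) ^ (n + 1)) = 1 := by
    simpa [tt, map_pow] using rel_one n (show tt ^ (2 ^ (n + 1)) ∈ K1R n from Set.mem_union_left _ (Set.mem_insert_of_mem _ (Set.mem_insert_of_mem _ (Set.mem_insert_of_mem _ (Set.mem_insert_of_mem _ (Set.mem_insert_of_mem _ (Set.mem_insert_of_mem _ (Set.mem_insert_of_mem _ (Set.mem_insert_of_mem _ (Set.mem_insert_of_mem _ (Set.mem_insert_of_mem _ (Set.mem_insert_of_mem _ (Set.mem_insert_of_mem _ (Set.mem_insert_of_mem _ (Set.mem_insert_of_mem _ (Set.mem_insert_of_mem _ (Set.mem_insert_of_mem _ (Set.mem_insert_of_mem _ (Set.mem_singleton _)))))))))))))))))))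
  calc (gen n .g2) ^ ((2 : ℕ) ^ (n + 3))
      = (gen n .g2) ^ (((2 ^ (n + 3) : ℕ) : ℤ)) := (zpow_natCast _ _).symm
    _ = ((gen n .g2) ^ (4 : ℤ)) ^ (((2 ^ (n + 1) : ℕ) : ℤ)) := by
        rw [← zpow_mul]; congr 1; push_cast; ring
    _ = (gen n .t) ^ (((2 ^ (n + 1) : ℕ) : ℤ)) := by rw [tau_eq]
    _ = (gen n .t) ^ ((2 : ℕ) ^ (n + 1)) := zpow_natCast _ _
    _ = 1 := hto

theorem y_conj (n : ℕ) : (gen n .g1)⁻¹ * gen n .g2 * gen n .g1 = (gen n .g2)⁻¹ := by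
  have h1 : (gen n .g1)⁻¹ * gen n .g2 * gen n .g1 * (gen n .g2 * gen n .g3)⁻¹ = 1 := by
    simpa [cnj, a1, a2, a3, map_mul, map_inv] using
      rel_one n (show cnj a2 a1 * (a2 * a3)⁻¹ ∈ K1R n from Set.mem_union_left _ (Set.mem_insert _ _))
  rw [mul_inv_eq_one] at h1
  rw [h1, gam3_eq]; group

theorem y_sq (n : ℕ) : gen n .g1 * gen n .g1 = 1 := by
  simpa [a1, pow_two, map_pow] using rel_one n (show a1 ^ 2 ∈ K1R n from Set.mem_union_right _ (Set.mem_insert _ _))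

theorem g4_sq (n : ℕ) : (gen n .g4) ^ (2 : ℕ) = 1 := by
  simpa [a4, map_pow] using rel_one n (show a4 ^ 2 ∈ K1R n from Set.mem_union_left _ (Set.mem_insert_of_mem _ (Set.mem_insert_of_mem _ (Set.mem_insert_of_mem _ (Set.mem_insert_of_mem _ (Set.mem_insert_of_mem _ (Set.mem_insert_of_mem _ (Set.mem_insert_of_mem _ (Set.mem_insert _ _)))))))))

theorem g5_sq (n : ℕ) : (gen n .g5) ^ (2 : ℕ) = 1 := by
  simpa [a5, map_pow] using rel_one n (show a5 ^ 2 ∈ K1R n from Set.mem_union_left _ (Set.mem_insert_of_mem _ (Set.mem_insert_of_mem _ (Set.mem_insert_of_mem _ (Set.mem_insert_of_mem _ (Set.mem_insert_of_mem _ (Set.mem_insert_of_mem _ (Set.mem_insert_of_mem _ (Set.mem_insert_of_mem _ (Set.mem_insert_of_mem _ (Set.mem_insert_of_mem _ (Set.mem_insert_of_mem _ (Set.mem_insert _ _)))))))))))))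

theorem c41 (n : ℕ) : Commute (gen n .g4) (gen n .g1) := by
  apply commute_of_conj
  simpa [cnj, a1, a4, map_mul, map_inv] using
    rel_one n (show cnj a4 a1 * a4⁻¹ ∈ K1R n from Set.mem_union_left _ (Set.mem_insert_of_mem _ (Set.mem_insert_of_mem _ (Set.mem_insert_of_mem _ (Set.mem_insert_of_mem _ (Set.mem_insert _ _))))))

theorem c42 (n : ℕ) : Commute (gen n .g4) (gen n .g2) := by
  apply commute_of_conj
  simpa [cnj, a2, a4, map_mul, map_inv] using
    rel_one n (show cnj a4 a2 * a4⁻¹ ∈ K1R n from Set.mem_union_left _ (Set.mem_insert_of_mem _ (Set.mem_insert_of_mem _ (Set.mem_insert_of_mem _ (Set.mem_insert_of_mem _ (Set.mem_insert_of_mem _ (Set.mem_insert _ _)))))))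

theorem c51 (n : ℕ) : Commute (gen n .g5) (gen n .g1) := by
  apply commute_of_conj
  simpa [cnj, a1, a5, map_mul, map_inv] using
    rel_one n (show cnj a5 a1 * a5⁻¹ ∈ K1R n from Set.mem_union_left _ (Set.mem_insert_of_mem _ (Set.mem_insert_of_mem _ (Set.mem_insert_of_mem _ (Set.mem_insert_of_mem _ (Set.mem_insert_of_mem _ (Set.mem_insert_of_mem _ (Set.mem_insert_of_mem _ (Set.mem_insert_of_mem _ (Set.mem_insert _ _))))))))))

theorem c52 (n : ℕ) : Commute (gen n .g5) (gen n .g2) := by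
  apply commute_of_conj
  simpa [cnj, a2, a5, map_mul, map_inv] using
    rel_one n (show cnj a5 a2 * a5⁻¹ ∈ K1R n from Set.mem_union_left _ (Set.mem_insert_of_mem _ (Set.mem_insert_of_mem _ (Set.mem_insert_of_mem _ (Set.mem_insert_of_mem _ (Set.mem_insert_of_mem _ (Set.mem_insert_of_mem _ (Set.mem_insert_of_mem _ (Set.mem_insert_of_mem _ (Set.mem_insert_of_mem _ (Set.mem_insert _ _)))))))))))

theorem c45 (n : ℕ) : Commute (gen n .g4) (gen n .g5) := by
  apply Commute.symm
  apply commute_of_conj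
  simpa [cnj, a4, a5, map_mul, map_inv] using
    rel_one n (show cnj a5 a4 * a5⁻¹ ∈ K1R n from Set.mem_union_right _ (Set.mem_insert_of_mem _ (Set.mem_insert_of_mem _ (Set.mem_singleton _))))

noncomputable def psi (n : ℕ) : GG n →* K1 n :=
  MonoidHom.noncommCoprod
    (dihedralLift (gen n .g2) (gen n .g1) (x_ord n) (y_conj n) (y_sq n))
    (klein4Lift (gen n .g4) (gen n .g5) (g4_sq n) (g5_sq n) (c45 n))
    (by
      rintro (i | i) a
      · show Commute ((gen n .g2) ^ ((i.val : ℤ)))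
          ((gen n .g4) ^ (((Multiplicative.toAdd a).1.val : ℤ)) *
            (gen n .g5) ^ (((Multiplicative.toAdd a).2.val : ℤ)))
        exact (((c42 n).symm.zpow_zpow _ _).mul_right ((c52 n).symm.zpow_zpow _ _))
      · show Commute (gen n .g1 * (gen n .g2) ^ ((i.val : ℤ)))
          ((gen n .g4) ^ (((Multiplicative.toAdd a).1.val : ℤ)) *
            (gen n .g5) ^ (((Multiplicative.toAdd a).2.val : ℤ)))
        exact Commute.mul_left
          (((c41 n).symm.zpow_right _).mul_right ((c51 n).symm.zpow_right _))
          (((c42 n).symm.zpow_zpow _ _).mul_right ((c52 n).symm.zpow_zpow _ _)))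

theorem psi_phi (n : ℕ) : ∀ g : K1 n, psi n (phi n g) = g := by
  suffices h : (psi n).comp (phi n) = MonoidHom.id (K1 n) by
    intro g
    exact DFunLike.congr_fun h g
  apply PresentedGroup.ext
  intro g
  show psi n (phi n (gen n g)) = gen n g
  rw [phi_gen]
  cases g
  case g1 =>
    show dihedralLift _ _ _ _ _ (sr (0 : ZMod (2 ^ (n + 3)))) *
      klein4Lift _ _ _ _ _ (1 : Multiplicative (ZMod 2 × ZMod 2)) = gen n .g1
    rw [map_one, dihedralLift_sr, mul_one, ZMod.val_zero]
    simp
  case g2 =>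
    show dihedralLift _ _ _ _ _ (r (1 : ZMod (2 ^ (n + 3)))) *
      klein4Lift _ _ _ _ _ (1 : Multiplicative (ZMod 2 × ZMod 2)) = gen n .g2
    rw [map_one, dihedralLift_r, mul_one, ZMod.val_one]
    simp
  case g3 =>
    show dihedralLift _ _ _ _ _ (r (-2 : ZMod (2 ^ (n + 3)))) *
      klein4Lift _ _ _ _ _ (1 : Multiplicative (ZMod 2 × ZMod 2)) = gen n .g3
    rw [map_one, dihedralLift_r, mul_one,
      show (-2 : ZMod (2 ^ (n + 3))) = ((-2 : ℤ) : ZMod (2 ^ (n + 3))) by push_cast; ring,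
      zpow_val_cast (x_ord n), ← gam3_eq]
  case t =>
    show dihedralLift _ _ _ _ _ (r (4 : ZMod (2 ^ (n + 3)))) *
      klein4Lift _ _ _ _ _ (1 : Multiplicative (ZMod 2 × ZMod 2)) = gen n .t
    rw [map_one, dihedralLift_r, mul_one,
      show (4 : ZMod (2 ^ (n + 3))) = ((4 : ℤ) : ZMod (2 ^ (n + 3))) by push_cast; ring,
      zpow_val_cast (x_ord n), ← tau_eq]
  case g4 =>
    show dihedralLift _ _ _ _ _ (1 : DihedralGroup (2 ^ (n + 3))) *
      klein4Lift _ _ _ _ _ (Multiplicative.ofAdd ((1 : ZMod 2), (0 : ZMod 2))) = gen n .g4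
    rw [map_one, one_mul, klein4Lift_apply, ZMod.val_one, ZMod.val_zero]
    simp
  case g5 =>
    show dihedralLift _ _ _ _ _ (1 : DihedralGroup (2 ^ (n + 3))) *
      klein4Lift _ _ _ _ _ (Multiplicative.ofAdd ((0 : ZMod 2), (1 : ZMod 2))) = gen n .g5
    rw [map_one, one_mul, klein4Lift_apply, ZMod.val_one, ZMod.val_zero]
    simp

theorem phi_mem_range (n : ℕ) : ∀ g : GG n, g ∈ (phi n).range := by
  have hr : ∀ g : KGen, fK n g ∈ (phi n).range := fun g => ⟨gen n g, phi_gen n g⟩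
  have key1 : ∀ i : ZMod (2 ^ (n + 3)), ((r i, 1) : GG n) ∈ (phi n).range := by
    intro i
    have h2 : (((r 1, 1) : GG n)) ^ (i.val) ∈ (phi n).range := pow_mem (hr .g2) _
    have he : (((r 1, 1) : GG n)) ^ (i.val) = ((r i, 1) : GG n) := by
      rw [Prod.pow_mk, one_pow, r_one_pow]
      simp [ZMod.natCast_val, ZMod.cast_id]
    rwa [he] at h2
  have key2 : ∀ d : DihedralGroup (2 ^ (n + 3)), ((d, 1) : GG n) ∈ (phi n).range := by
    rintro (i | i)
    · exact key1 i
    · have hs : ((sr i, 1) : GG n) = ((sr 0, 1) : GG n) * ((r i, 1) : GG n) := by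
        rw [Prod.mk_mul_mk, sr_mul_r, zero_add, one_mul]
      rw [hs]
      exact mul_mem (hr .g1) (key1 i)
  have key3 : ∀ a : Multiplicative (ZMod 2 × ZMod 2), ((1, a) : GG n) ∈ (phi n).range := by
    intro a
    have h45 : ((1, Multiplicative.ofAdd ((1 : ZMod 2), (0 : ZMod 2))) : GG n) ^
          ((Multiplicative.toAdd a).1.val) *
        ((1, Multiplicative.ofAdd ((0 : ZMod 2), (1 : ZMod 2))) : GG n) ^
          ((Multiplicative.toAdd a).2.val) ∈ (phi n).range :=
      mul_mem (pow_mem (hr .g4) _) (pow_mem (hr .g5) _)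
    have he : ((1, Multiplicative.ofAdd ((1 : ZMod 2), (0 : ZMod 2))) : GG n) ^
          ((Multiplicative.toAdd a).1.val) *
        ((1, Multiplicative.ofAdd ((0 : ZMod 2), (1 : ZMod 2))) : GG n) ^
          ((Multiplicative.toAdd a).2.val) = ((1, a) : GG n) := by
      rw [Prod.pow_mk, Prod.pow_mk, Prod.mk_mul_mk, one_pow, one_pow, one_mul]
      refine Prod.ext rfl ?_
      apply Multiplicative.toAdd.injective
      simp only [toAdd_mul, toAdd_pow, toAdd_ofAdd, Prod.smul_mk, Prod.mk_add_mk, smul_zero,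
        add_zero, zero_add, smul_eq_mul, nsmul_eq_mul, mul_one]
      rw [ZMod.natCast_val, ZMod.natCast_val, ZMod.cast_id, ZMod.cast_id]
    rwa [he] at h45
  rintro ⟨d, a⟩
  have hsplit : ((d, a) : GG n) = ((d, 1) : GG n) * ((1, a) : GG n) := by
    rw [Prod.mk_mul_mk, mul_one, one_mul]
  rw [hsplit]
  exact mul_mem (key2 d) (key3 a)

noncomputable def eqv (n : ℕ) : K1 n ≃* GG n :=
  MulEquiv.ofBijective (phi n)
    ⟨fun a b h => by
      have ha := psi_phi n a
      have hb := psi_phi n b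
      rw [← ha, ← hb, h],
     fun g => (phi_mem_range n g)⟩

theorem card_K1 (n : ℕ) : Nat.card (K1 n) = 2 ^ (n + 6) := by
  rw [Nat.card_congr (eqv n).toEquiv, Nat.card_prod, DihedralGroup.nat_card,
    Nat.card_congr (Multiplicative.toAdd (α := ZMod 2 × ZMod 2)), Nat.card_prod,
    Nat.card_zmod]
  ring

theorem lcs_K1_bot_iff (n k : ℕ) (hk : 1 ≤ k) :
    (⊤ : Subgroup (K1 n)).lowerCentralSeries k = ⊥ ↔ ((2 : ZMod (2 ^ (n + 3))) ^ k = 0) := by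
  rw [lcsBotIff (eqv n) k, lcsProd k, dihedral_lcs k hk, lcsComm hk,
    Subgroup.prod_eq_bot_iff]
  simp only [and_true, Subgroup.zpowers_eq_bot, one_def, r.injEq, eq_self_iff_true]

theorem lcs_K1_top (n : ℕ) : (⊤ : Subgroup (K1 n)).lowerCentralSeries (n + 3) = ⊥ := by
  rw [lcs_K1_bot_iff n (n + 3) (by omega)]
  calc (2 : ZMod (2 ^ (n + 3))) ^ (n + 3) = ((2 ^ (n + 3) : ℕ) : ZMod (2 ^ (n + 3))) := by
        push_cast; ring
    _ = 0 := ZMod.natCast_self _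

theorem lcs_K1_ne (n : ℕ) : (⊤ : Subgroup (K1 n)).lowerCentralSeries (n + 2) ≠ ⊥ := by
  rw [Ne, lcs_K1_bot_iff n (n + 2) (by omega)]
  intro h
  have h2 : ((2 ^ (n + 2) : ℕ) : ZMod (2 ^ (n + 3))) = 0 := by push_cast; ring_nf; ring_nf at h; exact h
  rw [ZMod.natCast_eq_zero_iff] at h2
  have := (Nat.pow_dvd_pow_iff_le_right (by norm_num : (1 : ℕ) < 2)).mp h2
  omega

def sigmaAdd : ZMod 2 × ZMod 2 ≃+ ZMod 2 × ZMod 2 where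
  toFun p := (p.2, p.1 + p.2)
  invFun p := (p.1 + p.2, p.1)
  left_inv := by decide
  right_inv := by decide
  map_add' := by decide

noncomputable def sGG (n : ℕ) : GG n ≃* GG n :=
  MulEquiv.prodCongr (MulEquiv.refl _) (AddEquiv.toMultiplicative sigmaAdd)

theorem sGG_cube (n : ℕ) (x : GG n) : sGG n (sGG n (sGG n x)) = x := by
  obtain ⟨d, a⟩ := x
  have h : ∀ b : Multiplicative (ZMod 2 × ZMod 2),
      (AddEquiv.toMultiplicative sigmaAdd) ((AddEquiv.toMultiplicative sigmaAdd)
        ((AddEquiv.toMultiplicative sigmaAdd) b)) = b := by decide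
  show ((d, (AddEquiv.toMultiplicative sigmaAdd) ((AddEquiv.toMultiplicative sigmaAdd)
    ((AddEquiv.toMultiplicative sigmaAdd) a))) : GG n) = (d, a)
  rw [h a]

theorem aut_not_pgroup (n : ℕ) : ¬ IsPGroup 2 (MulAut (K1 n)) := by
  intro h
  set σ : MulAut (K1 n) := ((eqv n).trans ((sGG n).trans (eqv n).symm)) with hσ
  have happ : ∀ g : K1 n, σ g = (eqv n).symm (sGG n (eqv n g)) := fun g => rfl
  have h3 : σ ^ 3 = 1 := by
    ext g
    rw [show σ ^ 3 = σ * σ * σ from pow_three σ]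
    simp only [MulAut.mul_apply, MulAut.one_apply]
    rw [happ, happ, happ, MulEquiv.apply_symm_apply, MulEquiv.apply_symm_apply,
      sGG_cube, MulEquiv.symm_apply_apply]
  have hne : σ ≠ 1 := by
    intro heq
    have h1 := happ ((eqv n).symm ((1 : DihedralGroup (2 ^ (n + 3))),
      Multiplicative.ofAdd ((1 : ZMod 2), (0 : ZMod 2))))
    rw [heq, MulEquiv.apply_symm_apply] at h1
    have h2 := (eqv n).symm.injective h1.symm
    have h4 : sGG n ((1 : DihedralGroup (2 ^ (n + 3))),
        Multiplicative.ofAdd ((1 : ZMod 2), (0 : ZMod 2))) =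
        ((1 : DihedralGroup (2 ^ (n + 3))), Multiplicative.ofAdd ((1 : ZMod 2), (0 : ZMod 2))) := h2
    have h5 : (Multiplicative.ofAdd ((0 : ZMod 2), (1 : ZMod 2))) =
        Multiplicative.ofAdd ((1 : ZMod 2), (0 : ZMod 2)) := congrArg Prod.snd h4
    exact absurd h5 (by decide)
  obtain ⟨k, hk⟩ := h σ
  have hdvd : orderOf σ ∣ 3 := orderOf_dvd_of_pow_eq_one h3
  have hdvd2 : orderOf σ ∣ 2 ^ k := orderOf_dvd_of_pow_eq_one hk
  have hc : Nat.gcd 3 (2 ^ k) = 1 := Nat.Coprime.pow_right k (by decide)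
  have h1 : orderOf σ ∣ 1 := hc ▸ Nat.dvd_gcd hdvd hdvd2
  exact hne (orderOf_eq_one_iff.mp (Nat.dvd_one.mp h1))

end K1Iso

/-- For every `n ≥ 2`, the group `Kₙ^1` has order `2^(n+6)`, nilpotency class `n + 3`
(hence coclass `3`), and its automorphism group is not a `2`-group. -/
theorem K1_card_class_autNotPGroup (n : ℕ) (hn : 2 ≤ n) :
    Nat.card (K1 n) = 2 ^ (n + 6) ∧
      (⊤ : Subgroup (K1 n)).lowerCentralSeries (n + 3) = ⊥ ∧
      (⊤ : Subgroup (K1 n)).lowerCentralSeries (n + 2) ≠ ⊥ ∧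
      ¬ IsPGroup 2 (MulAut (K1 n)) := by
  exact ⟨K1Iso.card_K1 n, K1Iso.lcs_K1_top n, K1Iso.lcs_K1_ne n, K1Iso.aut_not_pgroup n⟩
end

section
/- For every natural number n ≥ 2, the group K_n^2 (obtained from the common relations together with g1² = 1, g2² = g3·t^{1+2^n}, g5^{g4} = g5) has order 2^{n+6}, nilpotency class n + 3 (hence coclass 3), and its automorphism group Aut(K_n^2) is not a 2-group. -/
open KGen

open Multiplicative


open Multiplicative

/-- Hom out of `Multiplicative (ZMod M)` determined by an element whose `M`-th power is 1. -/
def zmodMulHom {X : Type*} [Group X] (M : ℕ) (g : X) (h : g ^ (M : ℤ) = 1) :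
    Multiplicative (ZMod M) →* X :=
  AddMonoidHom.toMultiplicativeLeft
    (ZMod.lift M ⟨zmultiplesHom (Additive X) (Additive.ofMul g), by
      simpa [zmultiplesHom] using congrArg Additive.ofMul h⟩)

@[simp] lemma zmodMulHom_int {X : Type*} [Group X] (M : ℕ) (g : X) (h : g ^ (M : ℤ) = 1)
    (z : ℤ) : zmodMulHom M g h (ofAdd ((z : ZMod M))) = g ^ z := by
  simp [zmodMulHom, AddMonoidHom.coe_toMultiplicativeLeft, zmultiplesHom]

lemma zmodMulHom_nat {X : Type*} [Group X] (M : ℕ) (g : X) (h : g ^ (M : ℤ) = 1)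
    (k : ℕ) : zmodMulHom M g h (ofAdd ((k : ZMod M))) = g ^ k := by
  have := zmodMulHom_int M g h (k : ℤ)
  rw [Int.cast_natCast, zpow_natCast] at this
  exact this

lemma zmodMulHom_one' {X : Type*} [Group X] (M : ℕ) (g : X) (h : g ^ (M : ℤ) = 1) :
    zmodMulHom M g h (ofAdd (1 : ZMod M)) = g := by
  have := zmodMulHom_nat M g h 1
  simpa using this

/-- Extensionality for homs out of `Multiplicative (ZMod M)`, `M ≠ 0`. -/
lemma mulZModHom_ext {M : ℕ} [NeZero M] {X : Type*} [Monoid X]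
    {F1 F2 : Multiplicative (ZMod M) →* X}
    (h : F1 (ofAdd (1 : ZMod M)) = F2 (ofAdd (1 : ZMod M))) : F1 = F2 := by
  refine MonoidHom.ext fun x => ?_
  have hx : x = (ofAdd (1 : ZMod M)) ^ (x.toAdd).val := by
    rw [← ofAdd_nsmul]
    have : (x.toAdd).val • (1 : ZMod M) = x.toAdd := by
      rw [nsmul_eq_mul, mul_one, ZMod.natCast_val, ZMod.cast_id]
    rw [this, ofAdd_toAdd]
  rw [hx, map_pow, map_pow, h]


open Multiplicative

namespace KModel

variable (n : ℕ)

abbrev M : ℕ := 2 ^ (n + 3)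

instance : NeZero (M n) := ⟨by positivity⟩

/-- `v = 2^(n+2) - 1`, the inverting unit. -/
def v : ZMod (M n) := 2 ^ (n + 2) - 1

lemma h0 : (2 : ZMod (M n)) ^ (n + 3) = 0 := by
  have := ZMod.natCast_self (M n)
  push_cast at this
  exact this

lemma hv : v n * v n = 1 := by
  unfold v
  linear_combination ((2 : ZMod (M n)) ^ (n + 1) - 1) * h0 n

/-- The unit `2^(n+2) - 1` of `ZMod (2^(n+3))`. -/
def uu : (ZMod (M n))ˣ := ⟨v n, v n, hv n, hv n⟩

/-- The order-2 automorphism of `Multiplicative (ZMod (2^(n+3)))`. -/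
def σ : MulAut (Multiplicative (ZMod (M n))) :=
  AddEquiv.toMultiplicative (AddAut.mulLeft (uu n))

@[simp] lemma σ_apply (m : ZMod (M n)) : σ n (ofAdd m) = ofAdd (v n * m) := rfl

lemma σ_sq : σ n ^ (2 : ℤ) = 1 := by
  ext x
  show (σ n) ((σ n) x) = x
  have : x = ofAdd (x.toAdd) := rfl
  rw [this, σ_apply, σ_apply, ← mul_assoc, hv, one_mul]

/-- The action hom `Multiplicative (ZMod 2) →* MulAut (Multiplicative (ZMod (2^(n+3))))`. -/
def φ : Multiplicative (ZMod 2) →* MulAut (Multiplicative (ZMod (M n))) :=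
  zmodMulHom 2 (σ n) (σ_sq n)

/-- The semidihedral group of order `2^(n+4)` as a semidirect product. -/
abbrev SD := SemidirectProduct (Multiplicative (ZMod (M n))) (Multiplicative (ZMod 2)) (φ n)

/-- Klein four group. -/
abbrev V := Multiplicative (ZMod 2) × Multiplicative (ZMod 2)

/-- The model group: semidihedral times Klein four. -/
abbrev GG := SD n × V

/-- `vv h = v ^ h.val`. -/
def vv (h : ZMod 2) : ZMod (M n) := v n ^ h.val

lemma zmod2_cases (h : ZMod 2) : h = 0 ∨ h = 1 := by revert h; decide

@[simp] lemma vv_zero : vv n 0 = 1 := by simp [vv]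
@[simp] lemma vv_one : vv n 1 = v n := pow_one _

lemma vv_mul_self (h : ZMod 2) : vv n h * vv n h = 1 := by
  rcases zmod2_cases h with rfl | rfl
  · simp
  · simpa using hv n

lemma vv_add (h1 h2 : ZMod 2) : vv n (h1 + h2) = vv n h1 * vv n h2 := by
  have h2' : (1 : ZMod 2) + 1 = 0 := by decide
  rcases zmod2_cases h1 with rfl | rfl <;> rcases zmod2_cases h2 with rfl | rfl <;>
    simp [h2', hv n]

lemma vv_neg (h : ZMod 2) : vv n (-h) = vv n h := by
  rcases zmod2_cases h with rfl | rfl <;> rfl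

lemma σ_pow_apply (k : ℕ) (m : ZMod (M n)) :
    (σ n ^ k) (ofAdd m) = ofAdd (v n ^ k * m) := by
  induction k with
  | zero => simp
  | succ k ih =>
    rw [pow_succ', MulAut.mul_apply, ih, σ_apply]
    congr 1
    ring

lemma φ_apply (h : ZMod 2) (m : ZMod (M n)) :
    φ n (ofAdd h) (ofAdd m) = ofAdd (vv n h * m) := by
  have hh : (ofAdd h) = ofAdd (((h.val : ℤ) : ZMod 2)) := by
    norm_cast
    rw [ZMod.natCast_val, ZMod.cast_id]
  rw [hh]
  show (zmodMulHom 2 (σ n) (σ_sq n)) _ _ = _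
  rw [zmodMulHom_int]
  rw [zpow_natCast, σ_pow_apply]
  rfl

/-- `P m h` : the element of the semidihedral group with normal part `m`, quotient part `h`. -/
def P (m : ZMod (M n)) (h : ZMod 2) : SD n := ⟨ofAdd m, ofAdd h⟩

lemma Pmul (m1 m2 : ZMod (M n)) (h1 h2 : ZMod 2) :
    P n m1 h1 * P n m2 h2 = P n (m1 + vv n h1 * m2) (h1 + h2) := by
  unfold P
  ext
  · show ofAdd m1 * φ n (ofAdd h1) (ofAdd m2) = ofAdd (m1 + vv n h1 * m2)
    rw [φ_apply, ← ofAdd_add]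
  · show ofAdd h1 * ofAdd h2 = ofAdd (h1 + h2)
    rw [← ofAdd_add]

lemma Pone : (1 : SD n) = P n 0 0 := rfl

lemma Pinv (m : ZMod (M n)) (h : ZMod 2) :
    (P n m h)⁻¹ = P n (-(vv n h * m)) (-h) := by
  symm
  apply eq_inv_of_mul_eq_one_left
  rw [Pmul, vv_neg]
  rw [show -(vv n h * m) + vv n h * m = 0 by ring, neg_add_cancel]
  simp [Pone]

lemma Ppow (m : ZMod (M n)) (k : ℕ) : P n m 0 ^ k = P n (k • m) 0 := by
  induction k with
  | zero => simp [Pone]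
  | succ k ih =>
    rw [pow_succ, ih, Pmul, vv_zero, one_mul, add_zero, succ_nsmul]

lemma Pzpow (m : ZMod (M n)) (z : ℤ) : P n m 0 ^ z = P n (z • m) 0 := by
  cases z with
  | ofNat k => simpa using Ppow n m k
  | negSucc k =>
    rw [zpow_negSucc, Ppow, Pinv, vv_zero, one_mul]
    rw [negSucc_zsmul, neg_zero]

lemma Pext (m1 m2 : ZMod (M n)) (h1 h2 : ZMod 2) :
    P n m1 h1 = P n m2 h2 ↔ (m1 = m2 ∧ h1 = h2) := by
  constructor
  · intro h
    have h1' := congrArg SemidirectProduct.left h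
    have h2' := congrArg SemidirectProduct.right h
    exact ⟨ofAdd.injective h1', ofAdd.injective h2'⟩
  · rintro ⟨rfl, rfl⟩; rfl

end KModel

namespace KModel

variable (n : ℕ)

def C : GG n := (P n 1 0, 1)
def A : GG n := (P n 0 1, 1)
def D : GG n := (1, (ofAdd 1, 1))
def E : GG n := (1, (1, ofAdd 1))

lemma Cz (z : ℤ) : (C n) ^ z = (P n ((z : ZMod (M n))) 0, 1) := by
  have : (C n) ^ z = ((P n 1 0) ^ z, (1 : V) ^ z) := rfl
  rw [this, Pzpow, one_zpow, zsmul_one]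

/-- The model images of the generators. -/
def f0 : KGen → GG n
  | KGen.g1 => A n
  | KGen.g2 => C n
  | KGen.g3 => (C n) ^ ((2 : ℤ) ^ (n + 2) - 2)
  | KGen.g4 => D n
  | KGen.g5 => E n
  | KGen.t => (C n) ^ (4 : ℤ)

lemma test1 : FreeGroup.lift (f0 n) (cnj a2 a1 * (a2 * a3)⁻¹) = 1 := by
  simp only [cnj, a1, a2, a3, map_mul, map_inv, FreeGroup.lift_apply_of, f0]
  rw [Cz]
  simp only [A, C, Prod.mk_mul_mk, Prod.inv_mk, Pmul, Pinv, mul_one, one_mul, mul_inv_cancel,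
    inv_one, vv_zero, vv_one]
  rw [Prod.mk_eq_one, Pone, Pext]
  refine ⟨⟨?_, by decide⟩, rfl⟩
  simp only [vv_neg, vv_add, vv_zero, vv_one, v]
  push_cast
  linear_combination (3 * (2 : ZMod (M n)) ^ (n + 1) - 2 ^ (2 * n + 3) - 1) * h0 n

end KModel

namespace KModel

variable (n : ℕ)

lemma Cpow (k : ℕ) : (C n) ^ k = (C n) ^ (k : ℤ) := (zpow_natCast _ _).symm

lemma CzPow (z : ℤ) (k : ℕ) : ((C n) ^ z) ^ k = (C n) ^ (z * k) := by
  rw [← zpow_natCast ((C n) ^ z), ← zpow_mul]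

lemma PVpow (m : ZMod (M n)) (k : ℕ) :
    ((P n m 0, (1 : V)) : GG n) ^ k = (P n ((k : ZMod (M n)) * m) 0, 1) := by
  have : ((P n m 0, (1 : V)) : GG n) ^ k = ((P n m 0) ^ k, (1 : V) ^ k) := rfl
  rw [this, Ppow, one_pow, nsmul_eq_mul]

lemma hrels : ∀ r ∈ (commonRels n ∪
    {a1 ^ 2, a2 ^ 2 * (a3 * tt ^ (1 + 2 ^ n))⁻¹, cnj a5 a4 * a5⁻¹}),
    FreeGroup.lift (f0 n) r = 1 := by
  rintro r (hr | hr) <;>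
    simp only [commonRels, Set.mem_insert_iff, Set.mem_singleton_iff] at hr
  · obtain rfl|rfl|rfl|rfl|rfl|rfl|rfl|rfl|rfl|rfl|rfl|rfl|rfl|rfl|rfl|rfl|rfl|rfl := hr <;>
      simp only [cnj, a1, a2, a3, a4, a5, tt, map_mul, map_inv, map_pow, FreeGroup.lift_apply_of, f0] <;>
      (try simp only [Cpow, Cz]) <;>
      simp only [pow_two, A, C, D, E, PVpow, Prod.mk_mul_mk, Prod.inv_mk, Pmul, Pinv, Pone,
        one_mul, mul_one, inv_one, vv_neg, vv_add, vv_zero, vv_one, Prod.mk_eq_one, Pext, v] <;>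
      refine ⟨⟨?_, by decide⟩, by decide⟩ <;>
      push_cast <;>
      (try ring)
    · linear_combination (6 * (2 : ZMod (M n)) ^ n - 8 * 2 ^ (2 * n) - 1) * h0 n
    · linear_combination (2 * (2 : ZMod (M n)) ^ n - 8 * 2 ^ (2 * n)) * h0 n
    · linear_combination (1 : ZMod (M n)) * h0 n
    · linear_combination (8 * (2 : ZMod (M n)) ^ n - 2) * h0 n
    · linear_combination (1 : ZMod (M n)) * h0 n
  · obtain rfl|rfl|rfl := hr <;>
      simp only [cnj, a1, a2, a3, a4, a5, tt, map_mul, map_inv, map_pow, FreeGroup.lift_apply_of, f0] <;>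
      (try simp only [Cpow, Cz]) <;>
      simp only [pow_two, A, C, D, E, PVpow, Prod.mk_mul_mk, Prod.inv_mk, Pmul, Pinv, Pone,
        one_mul, mul_one, inv_one, vv_neg, vv_add, vv_zero, vv_one, Prod.mk_eq_one, Pext, v] <;>
      refine ⟨⟨?_, by decide⟩, by decide⟩ <;>
      push_cast <;>
      (try ring)
    · linear_combination (-1 : ZMod (M n)) * h0 n
end KModel

namespace KModel

variable (n : ℕ)

/-- The defining relator set of `K2 n`. -/
abbrev rels2 : Set (FreeGroup KGen) :=
  commonRels n ∪ {a1 ^ 2, a2 ^ 2 * (a3 * tt ^ (1 + 2 ^ n))⁻¹, cnj a5 a4 * a5⁻¹}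

def b1 : K2 n := PresentedGroup.of KGen.g1
def b2 : K2 n := PresentedGroup.of KGen.g2
def b3 : K2 n := PresentedGroup.of KGen.g3
def b4 : K2 n := PresentedGroup.of KGen.g4
def b5 : K2 n := PresentedGroup.of KGen.g5
def bt : K2 n := PresentedGroup.of KGen.t

lemma relK {r : FreeGroup KGen} (hr : r ∈ rels2 n) :
    PresentedGroup.mk (rels2 n) r = 1 := by
  apply (QuotientGroup.eq_one_iff _).mpr
  exact Subgroup.subset_normalClosure hr

lemma mk_a1 : PresentedGroup.mk (rels2 n) a1 = b1 n := rfl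
lemma mk_a2 : PresentedGroup.mk (rels2 n) a2 = b2 n := rfl
lemma mk_a3 : PresentedGroup.mk (rels2 n) a3 = b3 n := rfl
lemma mk_a4 : PresentedGroup.mk (rels2 n) a4 = b4 n := rfl
lemma mk_a5 : PresentedGroup.mk (rels2 n) a5 = b5 n := rfl
lemma mk_tt : PresentedGroup.mk (rels2 n) tt = bt n := rfl

lemma kr1 : (b1 n)⁻¹ * b2 n * b1 n = b2 n * b3 n := by
  have := relK n (r := cnj a2 a1 * (a2 * a3)⁻¹) (by
    simp only [rels2, commonRels, Set.mem_union, Set.mem_insert_iff, Set.mem_singleton_iff]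
    tauto)
  simp only [cnj, map_mul, map_inv, mk_a1, mk_a2, mk_a3, mul_inv_eq_one] at this
  exact this

lemma kr4 : (b3 n) ^ 2 * bt n = 1 := by
  have := relK n (r := a3 ^ 2 * tt) (by
    simp only [rels2, commonRels, Set.mem_union, Set.mem_insert_iff, Set.mem_singleton_iff]
    tauto)
  simpa only [map_mul, map_pow, mk_a3, mk_tt] using this

lemma kr18 : (bt n) ^ ((2 : ℕ) ^ (n + 1)) = 1 := by
  have := relK n (r := tt ^ 2 ^ (n + 1)) (by
    simp only [rels2, commonRels, Set.mem_union, Set.mem_insert_iff, Set.mem_singleton_iff]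
    tauto)
  simpa only [map_pow, mk_tt] using this

lemma kr19 : (b1 n) ^ 2 = 1 := by
  have := relK n (r := a1 ^ 2) (by
    simp only [rels2, commonRels, Set.mem_union, Set.mem_insert_iff, Set.mem_singleton_iff]
    tauto)
  simpa only [map_pow, mk_a1] using this

lemma kr20 : (b2 n) ^ 2 = b3 n * (bt n) ^ (1 + 2 ^ n) := by
  have := relK n (r := a2 ^ 2 * (a3 * tt ^ (1 + 2 ^ n))⁻¹) (by
    simp only [rels2, commonRels, Set.mem_union, Set.mem_insert_iff, Set.mem_singleton_iff]
    tauto)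
  simp only [map_mul, map_pow, map_inv, mk_a2, mk_a3, mk_tt, mul_inv_eq_one] at this
  exact this

lemma conj_comm_of_rel {x y : K2 n} (h : y⁻¹ * x * y = x) : Commute x y := by
  have : x * y = y * x := by
    have := congrArg (fun z => y * z) h
    simp only [← mul_assoc, mul_inv_cancel, one_mul] at this
    exact this
  exact this

lemma kc14 : Commute (b1 n) (b4 n) := by
  refine (conj_comm_of_rel n ?_).symm
  have := relK n (r := cnj a4 a1 * a4⁻¹) (by
    simp only [rels2, commonRels, Set.mem_union, Set.mem_insert_iff, Set.mem_singleton_iff]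
    tauto)
  simp only [cnj, map_mul, map_inv, mk_a1, mk_a4, mul_inv_eq_one] at this
  exact this

lemma kc24 : Commute (b2 n) (b4 n) := by
  refine (conj_comm_of_rel n ?_).symm
  have := relK n (r := cnj a4 a2 * a4⁻¹) (by
    simp only [rels2, commonRels, Set.mem_union, Set.mem_insert_iff, Set.mem_singleton_iff]
    tauto)
  simp only [cnj, map_mul, map_inv, mk_a2, mk_a4, mul_inv_eq_one] at this
  exact this

lemma kc15 : Commute (b1 n) (b5 n) := by
  refine (conj_comm_of_rel n ?_).symm
  have := relK n (r := cnj a5 a1 * a5⁻¹) (by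
    simp only [rels2, commonRels, Set.mem_union, Set.mem_insert_iff, Set.mem_singleton_iff]
    tauto)
  simp only [cnj, map_mul, map_inv, mk_a1, mk_a5, mul_inv_eq_one] at this
  exact this

lemma kc25 : Commute (b2 n) (b5 n) := by
  refine (conj_comm_of_rel n ?_).symm
  have := relK n (r := cnj a5 a2 * a5⁻¹) (by
    simp only [rels2, commonRels, Set.mem_union, Set.mem_insert_iff, Set.mem_singleton_iff]
    tauto)
  simp only [cnj, map_mul, map_inv, mk_a2, mk_a5, mul_inv_eq_one] at this
  exact this

lemma kc45 : Commute (b4 n) (b5 n) := by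
  refine (conj_comm_of_rel n ?_).symm
  have := relK n (r := cnj a5 a4 * a5⁻¹) (by
    simp only [rels2, commonRels, Set.mem_union, Set.mem_insert_iff, Set.mem_singleton_iff]
    tauto)
  simp only [cnj, map_mul, map_inv, mk_a4, mk_a5, mul_inv_eq_one] at this
  exact this

lemma kr44 : (b4 n) ^ 2 = 1 := by
  have := relK n (r := a4 ^ 2) (by
    simp only [rels2, commonRels, Set.mem_union, Set.mem_insert_iff, Set.mem_singleton_iff]
    tauto)
  simpa only [map_pow, mk_a4] using this

lemma kr55 : (b5 n) ^ 2 = 1 := by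
  have := relK n (r := a5 ^ 2) (by
    simp only [rels2, commonRels, Set.mem_union, Set.mem_insert_iff, Set.mem_singleton_iff]
    tauto)
  simpa only [map_pow, mk_a5] using this

/-! Derived power relations. -/

lemma kr4' : (b3 n) ^ (2 : ℤ) = (bt n)⁻¹ := by
  have h2 : (b3 n) ^ (2:ℕ) = (bt n)⁻¹ := eq_inv_of_mul_eq_one_left (kr4 n)
  rw [show ((2:ℤ)) = ((2:ℕ):ℤ) by norm_num, zpow_natCast, h2]

lemma kb2sq : (b2 n) ^ (2 : ℤ) = (b3 n) ^ (-(1 + 2 ^ (n + 1)) : ℤ) := by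
  rw [show ((2:ℤ)) = ((2:ℕ):ℤ) by norm_num, zpow_natCast, kr20]
  rw [show (bt n) ^ (1 + 2 ^ n) = (bt n) ^ ((1 + 2 ^ n : ℕ) : ℤ) from (zpow_natCast _ _).symm]
  rw [show bt n = ((b3 n) ^ (2:ℤ))⁻¹ from by rw [kr4' n, inv_inv], ← zpow_neg, ← zpow_mul]
  rw [show b3 n = (b3 n) ^ (1:ℤ) from (zpow_one _).symm]
  nth_rewrite 2 [show (b3 n) ^ (1:ℤ) = b3 n from zpow_one _]
  rw [← zpow_add]
  congr 1
  push_cast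
  ring

lemma kb3ord : (b3 n) ^ ((2 : ℤ) ^ (n + 2)) = 1 := by
  rw [show ((2:ℤ) ^ (n + 2)) = 2 * ((2 ^ (n+1) : ℕ) : ℤ) by push_cast; ring, zpow_mul,
    kr4' n, inv_zpow, zpow_natCast, kr18 n, inv_one]

lemma kb3 : b3 n = (b2 n) ^ ((2:ℤ) ^ (n + 2) - 2) := by
  have e1 : ((2:ℤ) ^ (n + 2) - 2) = 2 * (2 ^ (n+1) - 1) := by ring
  rw [e1, zpow_mul, kb2sq, ← zpow_mul]
  have e2 : (-(1 + 2 ^ (n + 1)) * (2 ^ (n + 1) - 1) : ℤ) = 1 + (2:ℤ)^(n+2) * (-(2^n)) := by ring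
  rw [e2, zpow_add, zpow_mul, kb3ord, one_zpow, mul_one, zpow_one]

lemma kb2ord : (b2 n) ^ ((2:ℤ) ^ (n + 3)) = 1 := by
  have e1 : ((2:ℤ) ^ (n + 3)) = 2 * 2 ^ (n+2) := by ring
  rw [e1, zpow_mul, kb2sq, ← zpow_mul]
  have e2 : (-(1 + 2 ^ (n + 1)) * 2 ^ (n + 2) : ℤ) = (2:ℤ)^(n+2) * (-(1 + 2 ^ (n + 1))) := by ring
  rw [e2, zpow_mul, kb3ord, one_zpow]

lemma kbt4 : bt n = (b2 n) ^ (4:ℤ) := by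
  rw [show bt n = ((b3 n) ^ (2:ℤ))⁻¹ from by rw [kr4' n, inv_inv], kb3, ← zpow_mul, ← zpow_neg]
  have e : (-((2 ^ (n + 2) - 2) * 2) : ℤ) = 4 + (2:ℤ)^(n+3) * (-1) := by ring
  rw [e, zpow_add, zpow_mul, kb2ord, one_zpow, mul_one]

lemma kconj : (b1 n)⁻¹ * b2 n * b1 n = (b2 n) ^ ((2:ℤ) ^ (n + 2) - 1) := by
  rw [kr1 n, kb3]
  nth_rewrite 1 [show b2 n = (b2 n) ^ (1:ℤ) from (zpow_one _).symm]
  rw [← zpow_add]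
  congr 1
  ring

lemma kb1inv : (b1 n)⁻¹ = b1 n := by
  apply inv_eq_of_mul_eq_one_left
  rw [← pow_two]
  exact kr19 n

end KModel

namespace KModel

variable (n : ℕ)

lemma zmodMulHom_eq_pow {m : ℕ} [NeZero m] {X : Type*} [Monoid X]
    (F : Multiplicative (ZMod m) →* X) (y : Multiplicative (ZMod m)) :
    F y = F (ofAdd (1 : ZMod m)) ^ (y.toAdd).val := by
  have hy : y = (ofAdd (1 : ZMod m)) ^ (y.toAdd).val := by
    rw [← ofAdd_nsmul]
    have : (y.toAdd).val • (1 : ZMod m) = y.toAdd := by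
      rw [nsmul_eq_mul, mul_one, ZMod.natCast_val, ZMod.cast_id]
    rw [this, ofAdd_toAdd]
  rw [← map_pow, ← hy]

lemma kb2ord' : (b2 n) ^ ((M n : ℕ) : ℤ) = 1 := by
  have : ((M n : ℕ) : ℤ) = (2:ℤ) ^ (n+3) := by simp [M]
  rw [this, kb2ord]

lemma kb1ord : (b1 n) ^ ((2 : ℕ) : ℤ) = 1 := by
  rw [zpow_natCast]; exact kr19 n

lemma kb4ord : (b4 n) ^ ((2 : ℕ) : ℤ) = 1 := by
  rw [zpow_natCast]; exact kr44 n

lemma kb5ord : (b5 n) ^ ((2 : ℕ) : ℤ) = 1 := by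
  rw [zpow_natCast]; exact kr55 n

/-- `fn : Multiplicative (ZMod (2^(n+3))) →* K2 n` sending the generator to `b2`. -/
def fn : Multiplicative (ZMod (M n)) →* K2 n := zmodMulHom (M n) (b2 n) (kb2ord' n)

/-- `fh : Multiplicative (ZMod 2) →* K2 n` sending the generator to `b1`. -/
def fh : Multiplicative (ZMod 2) →* K2 n := zmodMulHom 2 (b1 n) (kb1ord n)

lemma fn_one' : fn n (ofAdd (1 : ZMod (M n))) = b2 n := zmodMulHom_one' _ _ _
lemma fh_one' : fh n (ofAdd (1 : ZMod 2)) = b1 n := zmodMulHom_one' _ _ _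
lemma fn_int (z : ℤ) : fn n (ofAdd ((z : ZMod (M n)))) = (b2 n) ^ z := zmodMulHom_int _ _ _ _
lemma fh_zero : fh n (ofAdd (0 : ZMod 2)) = 1 := by
  have := zmodMulHom_nat 2 (b1 n) (kb1ord n) 0
  simpa using this

lemma v_cast : v n = (((2:ℤ) ^ (n+2) - 1 : ℤ) : ZMod (M n)) := by
  unfold v; push_cast; ring

lemma compat : ∀ g : Multiplicative (ZMod 2),
    (fn n).comp ((φ n) g).toMonoidHom = (MulAut.conj (fh n g)).toMonoidHom.comp (fn n) := by
  intro g
  apply mulZModHom_ext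
  rcases zmod2_cases (g.toAdd) with hg | hg <;>
      rw [show g = ofAdd (g.toAdd) from rfl, hg] <;>
      simp only [MonoidHom.comp_apply, MulEquiv.coe_toMonoidHom, MulAut.conj_apply]
  · rw [φ_apply, vv_zero, one_mul, fh_zero, one_mul, inv_one, mul_one]
  · rw [φ_apply, vv_one, mul_one, v_cast, fn_int, fh_one', fn_one', kb1inv n]
    nth_rewrite 1 [← kb1inv n]
    exact (kconj n).symm

/-- The hom from the semidihedral part to `K2 n`. -/
def SDhom : SD n →* K2 n := SemidirectProduct.lift (fn n) (fh n) (compat n)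

/-- The hom from the Klein part to `K2 n`. -/
def Vhom : V →* K2 n :=
  MonoidHom.noncommCoprod (zmodMulHom 2 (b4 n) (kb4ord n)) (zmodMulHom 2 (b5 n) (kb5ord n))
    (by
      intro x y
      rw [zmodMulHom_eq_pow, zmodMulHom_eq_pow (zmodMulHom 2 (b5 n) (kb5ord n)),
        zmodMulHom_one', zmodMulHom_one']
      exact (kc45 n).pow_pow _ _)

lemma SDhom_apply (m : ZMod (M n)) (h : ZMod 2) :
    SDhom n (P n m h) = fn n (ofAdd m) * fh n (ofAdd h) := by
  have : P n m h = SemidirectProduct.inl (ofAdd m) * SemidirectProduct.inr (ofAdd h) := by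
    unfold P
    ext <;> simp
  rw [this, map_mul, SDhom, SemidirectProduct.lift_inl, SemidirectProduct.lift_inr]

/-- The hom from the model group to `K2 n`. -/
def Ghom : GG n →* K2 n :=
  MonoidHom.noncommCoprod (SDhom n) (Vhom n) (by
    intro s w
    have hs : SDhom n s = (b2 n) ^ ((s.left).toAdd.val) * (b1 n) ^ ((s.right).toAdd.val) := by
      rw [show s = P n (s.left).toAdd (s.right).toAdd from rfl, SDhom_apply,
        zmodMulHom_eq_pow (fn n), zmodMulHom_eq_pow (fh n), fn_one', fh_one']
      rfl
    have hw : Vhom n w = (b4 n) ^ ((w.1).toAdd.val) * (b5 n) ^ ((w.2).toAdd.val) := by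
      rw [show Vhom n w = zmodMulHom 2 (b4 n) (kb4ord n) w.1 *
        zmodMulHom 2 (b5 n) (kb5ord n) w.2 from rfl,
        zmodMulHom_eq_pow, zmodMulHom_eq_pow (zmodMulHom 2 (b5 n) (kb5ord n)),
        zmodMulHom_one', zmodMulHom_one']
    rw [hs, hw]
    exact Commute.mul_left
      (Commute.mul_right ((kc24 n).pow_pow _ _) ((kc25 n).pow_pow _ _))
      (Commute.mul_right ((kc14 n).pow_pow _ _) ((kc15 n).pow_pow _ _)))

lemma zmodMulHom_zero {X : Type*} [Group X] (M' : ℕ) (g : X) (h : g ^ ((M' : ℕ) : ℤ) = 1) :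
    zmodMulHom M' g h (ofAdd (0 : ZMod M')) = 1 := by
  have := zmodMulHom_nat M' g h 0
  simpa using this

lemma Ghom_C : Ghom n (C n) = b2 n := by
  rw [show Ghom n (C n) = SDhom n (P n 1 0) * Vhom n 1 from rfl, map_one (Vhom n), mul_one,
    SDhom_apply, fn_one', fh_zero, mul_one]

lemma Ghom_A : Ghom n (A n) = b1 n := by
  rw [show Ghom n (A n) = SDhom n (P n 0 1) * Vhom n 1 from rfl, map_one (Vhom n), mul_one,
    SDhom_apply, fh_one']
  rw [show fn n (ofAdd (0 : ZMod (M n))) = 1 from zmodMulHom_zero _ _ _, one_mul]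

lemma Ghom_D : Ghom n (D n) = b4 n := by
  rw [show Ghom n (D n) = SDhom n 1 * Vhom n (ofAdd 1, 1) from rfl, map_one (SDhom n), one_mul,
    show Vhom n (ofAdd 1, 1) = zmodMulHom 2 (b4 n) (kb4ord n) (ofAdd 1) *
      zmodMulHom 2 (b5 n) (kb5ord n) (ofAdd (0 : ZMod 2)) from rfl, zmodMulHom_zero, mul_one,
    zmodMulHom_one']

lemma Ghom_E : Ghom n (E n) = b5 n := by
  rw [show Ghom n (E n) = SDhom n 1 * Vhom n (1, ofAdd 1) from rfl, map_one (SDhom n), one_mul,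
    show Vhom n (1, ofAdd 1) = zmodMulHom 2 (b4 n) (kb4ord n) (ofAdd (0 : ZMod 2)) *
      zmodMulHom 2 (b5 n) (kb5ord n) (ofAdd 1) from rfl, zmodMulHom_zero, one_mul,
    zmodMulHom_one']

end KModel

namespace KModel

variable (n : ℕ)

/-- The hom `K2 n →* GG n`. -/
def FGhom : K2 n →* GG n := PresentedGroup.toGroup (hrels n)

lemma FG_b1 : FGhom n (b1 n) = A n := PresentedGroup.toGroup.of _
lemma FG_b2 : FGhom n (b2 n) = C n := PresentedGroup.toGroup.of _
lemma FG_b3 : FGhom n (b3 n) = (C n) ^ ((2:ℤ) ^ (n + 2) - 2) := PresentedGroup.toGroup.of _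
lemma FG_b4 : FGhom n (b4 n) = D n := PresentedGroup.toGroup.of _
lemma FG_b5 : FGhom n (b5 n) = E n := PresentedGroup.toGroup.of _
lemma FG_bt : FGhom n (bt n) = (C n) ^ (4:ℤ) := PresentedGroup.toGroup.of _

lemma comp1 : (Ghom n).comp (FGhom n) = MonoidHom.id (K2 n) := by
  apply PresentedGroup.ext
  intro x
  cases x <;>
    simp only [MonoidHom.comp_apply, MonoidHom.id_apply]
  · rw [show (PresentedGroup.of KGen.g1 : K2 n) = b1 n from rfl, FG_b1, Ghom_A]
  · rw [show (PresentedGroup.of KGen.g2 : K2 n) = b2 n from rfl, FG_b2, Ghom_C]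
  · rw [show (PresentedGroup.of KGen.g3 : K2 n) = b3 n from rfl, FG_b3, map_zpow, Ghom_C]
    exact (kb3 n).symm
  · rw [show (PresentedGroup.of KGen.g4 : K2 n) = b4 n from rfl, FG_b4, Ghom_D]
  · rw [show (PresentedGroup.of KGen.g5 : K2 n) = b5 n from rfl, FG_b5, Ghom_E]
  · rw [show (PresentedGroup.of KGen.t : K2 n) = bt n from rfl, FG_bt, map_zpow, Ghom_C]
    exact (kbt4 n).symm

lemma Cnat (k : ℕ) : (C n) ^ k = ((P n ((k : ZMod (M n))) 0, 1) : GG n) := by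
  rw [Cpow, Cz]
  norm_num

lemma Apow (k : ℕ) : (A n) ^ k = ((P n 0 ((k : ZMod 2)), 1) : GG n) := by
  induction k with
  | zero => rw [pow_zero, Nat.cast_zero, ← Pone]; rfl
  | succ k ih =>
    rw [pow_succ, ih, show A n = ((P n 0 1, 1) : GG n) from rfl, Prod.mk_mul_mk, Pmul, mul_one]
    push_cast
    ring_nf

lemma Dpow (k : ℕ) : (D n) ^ k = ((1, (ofAdd ((k : ZMod 2)), 1)) : GG n) := by
  induction k with
  | zero => rw [pow_zero, Nat.cast_zero]; rfl
  | succ k ih =>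
    rw [pow_succ, ih, show D n = ((1, (ofAdd 1, 1)) : GG n) from rfl, Prod.mk_mul_mk,
      Prod.mk_mul_mk, mul_one, one_mul, ← ofAdd_add]
    push_cast
    ring_nf

lemma Epow (k : ℕ) : (E n) ^ k = ((1, (1, ofAdd ((k : ZMod 2)))) : GG n) := by
  induction k with
  | zero => rw [pow_zero, Nat.cast_zero]; rfl
  | succ k ih =>
    rw [pow_succ, ih, show E n = ((1, (1, ofAdd 1)) : GG n) from rfl, Prod.mk_mul_mk,
      Prod.mk_mul_mk, mul_one, one_mul, ← ofAdd_add]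
    push_cast
    ring_nf

lemma Gdecomp (m : ZMod (M n)) (h : ZMod 2) (c d : ZMod 2) :
    ((P n m h, (ofAdd c, ofAdd d)) : GG n) =
      (C n) ^ (m.val) * (A n) ^ (h.val) * (D n) ^ (c.val) * (E n) ^ (d.val) := by
  rw [Cnat, Apow, Dpow, Epow, ZMod.natCast_val, ZMod.cast_id, ZMod.natCast_val, ZMod.cast_id,
    ZMod.natCast_val, ZMod.cast_id, ZMod.natCast_val, ZMod.cast_id]
  rw [Prod.mk_mul_mk, Prod.mk_mul_mk, Prod.mk_mul_mk, Pmul, Prod.mk_mul_mk, Prod.mk_mul_mk,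
    Prod.mk_mul_mk]
  simp only [vv_zero, one_mul, mul_one, add_zero, zero_add, mul_zero,
    Prod.fst_one, Prod.snd_one]

lemma Ghom_x (x : GG n) :
    Ghom n x = (b2 n) ^ ((x.1.left).toAdd.val) * (b1 n) ^ ((x.1.right).toAdd.val) *
      (b4 n) ^ ((x.2.1).toAdd.val) * (b5 n) ^ ((x.2.2).toAdd.val) := by
  rw [show Ghom n x = SDhom n x.1 * Vhom n x.2 from rfl]
  rw [show SDhom n x.1 = fn n (x.1.left) * fh n (x.1.right) from by
    rw [show x.1 = P n (x.1.left).toAdd (x.1.right).toAdd from rfl, SDhom_apply]; rfl]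
  rw [show Vhom n x.2 = zmodMulHom 2 (b4 n) (kb4ord n) x.2.1 *
    zmodMulHom 2 (b5 n) (kb5ord n) x.2.2 from rfl]
  rw [zmodMulHom_eq_pow (fn n), zmodMulHom_eq_pow (fh n),
    zmodMulHom_eq_pow (zmodMulHom 2 (b4 n) (kb4ord n)),
    zmodMulHom_eq_pow (zmodMulHom 2 (b5 n) (kb5ord n)),
    fn_one', fh_one', zmodMulHom_one', zmodMulHom_one']
  rw [mul_assoc, mul_assoc, mul_assoc]

lemma comp2 : (FGhom n).comp (Ghom n) = MonoidHom.id (GG n) := by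
  apply MonoidHom.ext
  intro x
  simp only [MonoidHom.comp_apply, MonoidHom.id_apply]
  rw [Ghom_x, map_mul, map_mul, map_mul, map_pow, map_pow, map_pow, map_pow,
    FG_b1, FG_b2, FG_b4, FG_b5]
  conv_rhs => rw [show x = ((P n (x.1.left).toAdd (x.1.right).toAdd,
    (ofAdd (x.2.1).toAdd, ofAdd (x.2.2).toAdd)) : GG n) from rfl, Gdecomp]

/-- The isomorphism `K2 n ≃* GG n`. -/
def isoKG : K2 n ≃* GG n := MonoidHom.toMulEquiv (FGhom n) (Ghom n) (comp1 n) (comp2 n)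

end KModel

namespace KModel

variable (n : ℕ)

lemma card_GG : Nat.card (GG n) = 2 ^ (n + 6) := by
  have e : SD n ≃ (Multiplicative (ZMod (M n)) × Multiplicative (ZMod 2)) :=
    ⟨fun s => (s.left, s.right), fun p => ⟨p.1, p.2⟩, fun s => rfl, fun p => rfl⟩
  rw [Nat.card_prod, Nat.card_congr e, Nat.card_prod, Nat.card_prod]
  have h1 : Nat.card (Multiplicative (ZMod (M n))) = 2 ^ (n + 3) := by
    rw [Nat.card_congr (Multiplicative.toAdd (α := ZMod (M n))), Nat.card_zmod]
  have h2 : Nat.card (Multiplicative (ZMod 2)) = 2 := by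
    rw [Nat.card_congr (Multiplicative.toAdd (α := ZMod 2)), Nat.card_zmod]
  rw [h1, h2]
  ring

/-! ### Lower central series -/

/-- Generator of the `k`-th term. -/
def w (k : ℕ) : GG n := ((P n ((v n - 1) ^ k) 0, 1) : GG n)

lemma PVzpow (m : ZMod (M n)) (z : ℤ) :
    ((P n m 0, (1 : V)) : GG n) ^ z = (P n ((z : ZMod (M n)) * m) 0, 1) := by
  have : ((P n m 0, (1 : V)) : GG n) ^ z = ((P n m 0) ^ z, (1 : V) ^ z) := rfl
  rw [this, Pzpow, one_zpow, zsmul_eq_mul]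

lemma mem_zpowers_w (k : ℕ) (x : ZMod (M n)) :
    ((P n (x * (v n - 1) ^ k) 0, 1) : GG n) ∈ Subgroup.zpowers (w n k) := by
  rw [Subgroup.mem_zpowers_iff]
  refine ⟨(x.val : ℤ), ?_⟩
  rw [w, PVzpow]
  congr 2
  push_cast
  rw [ZMod.natCast_val, ZMod.cast_id]

lemma vv_sub_one (h : ZMod 2) :
    vv n h - 1 = (h.val : ZMod (M n)) * (v n - 1) := by
  rcases zmod2_cases h with rfl | rfl
  · rw [show ((0 : ZMod 2)).val = 0 from rfl, Nat.cast_zero, zero_mul, vv_zero, sub_self]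
  · rw [show ((1 : ZMod 2)).val = 1 from rfl, Nat.cast_one, one_mul, vv_one]

open scoped commutatorElement in
lemma comm_P (m1 m2 : ZMod (M n)) (h1 h2 : ZMod 2) (v1 v2 : V) :
    ⁅((P n m1 h1, v1) : GG n), ((P n m2 h2, v2) : GG n)⁆ =
      (P n ((v n - 1) * ((h1.val : ZMod (M n)) * m2 - (h2.val : ZMod (M n)) * m1)) 0, 1) := by
  simp only [commutatorElement_def, Prod.mk_mul_mk, Prod.inv_mk, Pmul, Pinv, vv_add, vv_neg]
  rw [Prod.mk.injEq]
  constructor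
  · rw [Pext]
    constructor
    · have hA := vv_mul_self n h1
      have hB := vv_mul_self n h2
      have hA1 := vv_sub_one n h1
      have hB1 := vv_sub_one n h2
      linear_combination (-(m1 * vv n h2) - m2 * vv n h2 * vv n h2) * hA + (-m2) * hB
        + m2 * hA1 + (-m1) * hB1
    · ring
  · have h12 : v1 * v2 = v2 * v1 := mul_comm _ _
    rw [h12, mul_inv_cancel_right, mul_inv_cancel]

lemma lcs_le : ∀ k : ℕ, (⊤ : Subgroup (GG n)).lowerCentralSeries (k + 1) ≤ Subgroup.zpowers (w n (k + 1)) := by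
  intro k
  induction k with
  | zero =>
    rw [show (⊤ : Subgroup (GG n)).lowerCentralSeries 1 = ⁅(⊤ : Subgroup (GG n)).lowerCentralSeries 0, ⊤⁆ from rfl,
      lowerCentralSeries_zero]
    apply Subgroup.commutator_le.mpr
    intro g1 _ g2 _
    rw [show g1 = ((P n (g1.1.left).toAdd (g1.1.right).toAdd, g1.2) : GG n) from rfl,
      show g2 = ((P n (g2.1.left).toAdd (g2.1.right).toAdd, g2.2) : GG n) from rfl,
      comm_P]
    rw [show (v n - 1) * ((((g1.1.right).toAdd.val : ZMod (M n))) * (g2.1.left).toAdd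
        - (((g2.1.right).toAdd.val : ZMod (M n))) * (g1.1.left).toAdd)
      = ((((g1.1.right).toAdd.val : ZMod (M n))) * (g2.1.left).toAdd
        - (((g2.1.right).toAdd.val : ZMod (M n))) * (g1.1.left).toAdd) * (v n - 1) ^ 1 from by
        ring]
    exact mem_zpowers_w n 1 _
  | succ k ih =>
    rw [show (⊤ : Subgroup (GG n)).lowerCentralSeries (k + 2) = ⁅(⊤ : Subgroup (GG n)).lowerCentralSeries (k + 1), ⊤⁆ from rfl]
    apply Subgroup.commutator_le.mpr
    intro g1 hg1 g2 _
    obtain ⟨z, rfl⟩ := Subgroup.mem_zpowers_iff.mp (ih hg1)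
    rw [show w n (k + 1) = ((P n ((v n - 1) ^ (k + 1)) 0, 1) : GG n) from rfl, PVzpow,
      show g2 = ((P n (g2.1.left).toAdd (g2.1.right).toAdd, g2.2) : GG n) from rfl, comm_P]
    rw [show (v n - 1) * ((((0 : ZMod 2).val : ZMod (M n))) * (g2.1.left).toAdd
        - (((g2.1.right).toAdd.val : ZMod (M n))) * ((z : ZMod (M n)) * (v n - 1) ^ (k+1)))
      = (-(((g2.1.right).toAdd.val : ZMod (M n)) * (z : ZMod (M n)))) * (v n - 1) ^ (k + 2) from by
        rw [show ((0 : ZMod 2).val : ZMod (M n)) = 0 from by simp]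
        ring]
    exact mem_zpowers_w n (k + 2) _

lemma vm1_pow_n3 : (v n - 1) ^ (n + 3) = 0 := by
  rw [show v n - 1 = 2 * ((2 : ZMod (M n)) ^ (n + 1) - 1) from by rw [v]; ring, mul_pow,
    show ((2 : ZMod (M n))) ^ (n + 3) = 0 from h0 n, zero_mul]

lemma lcs_GG_bot : (⊤ : Subgroup (GG n)).lowerCentralSeries (n + 3) = ⊥ := by
  have h := lcs_le n (n + 2)
  rw [show n + 2 + 1 = n + 3 from rfl] at h
  rw [eq_bot_iff]
  refine le_trans h ?_
  rw [show w n (n + 3) = 1 from by rw [w, vm1_pow_n3, ← Pone]; rfl]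
  rw [Subgroup.zpowers_one_eq_bot]

open scoped commutatorElement in
lemma w_mem_lcs : ∀ k : ℕ, w n k ∈ (⊤ : Subgroup (GG n)).lowerCentralSeries k := by
  intro k
  induction k with
  | zero => exact Subgroup.mem_top _
  | succ k ih =>
    have hc : ⁅w n k, A n⁆ ∈ ⁅(⊤ : Subgroup (GG n)).lowerCentralSeries k, (⊤ : Subgroup (GG n))⁆ :=
      Subgroup.commutator_mem_commutator ih (Subgroup.mem_top _)
    rw [show ⁅(⊤ : Subgroup (GG n)).lowerCentralSeries k, (⊤ : Subgroup (GG n))⁆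
      = (⊤ : Subgroup (GG n)).lowerCentralSeries (k + 1) from rfl] at hc
    have he : ⁅w n k, A n⁆ = (w n (k + 1))⁻¹ := by
      rw [show w n k = ((P n ((v n - 1) ^ k) 0, 1) : GG n) from rfl,
        show A n = ((P n 0 1, 1) : GG n) from rfl, comm_P,
        show w n (k + 1) = ((P n ((v n - 1) ^ (k + 1)) 0, 1) : GG n) from rfl,
        show ((P n ((v n - 1) ^ (k + 1)) 0, (1 : V)) : GG n)⁻¹
          = ((P n ((v n - 1) ^ (k + 1)) 0)⁻¹, ((1 : V))⁻¹) from rfl, Pinv, inv_one,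
        vv_zero, one_mul, neg_zero, Prod.mk.injEq, Pext]
      refine ⟨⟨?_, rfl⟩, rfl⟩
      rw [show ((0 : ZMod 2)).val = 0 from rfl, show ((1 : ZMod 2)).val = 1 from rfl,
        Nat.cast_zero, Nat.cast_one]
      ring
    rw [he] at hc
    exact (Subgroup.inv_mem_iff _).mp hc

end KModel

namespace KModel

variable (n : ℕ)

lemma vm1_pow_n2 : (v n - 1) ^ (n + 2) = (2 : ZMod (M n)) ^ (n + 2) := by
  have hodd : Odd (((2:ℤ) ^ (n + 1) - 1) ^ (n + 2)) := by
    apply Odd.pow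
    refine ⟨2 ^ n - 1, ?_⟩
    have : (2:ℤ) ^ (n + 1) = 2 * 2 ^ n := by ring
    rw [this]; ring
  obtain ⟨t, ht⟩ := hodd
  have hz : ((2:ℤ) ^ (n + 2) - 2) ^ (n + 2) = 2 ^ (n + 2) + 2 ^ (n + 3) * t := by
    calc ((2:ℤ) ^ (n + 2) - 2) ^ (n + 2) = (2 * ((2:ℤ) ^ (n + 1) - 1)) ^ (n + 2) := by ring_nf
    _ = 2 ^ (n + 2) * ((2:ℤ) ^ (n + 1) - 1) ^ (n + 2) := by rw [mul_pow]
    _ = 2 ^ (n + 2) * (2 * t + 1) := by rw [ht]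
    _ = 2 ^ (n + 2) + 2 ^ (n + 3) * t := by ring
  have hcast : v n - 1 = (((2:ℤ) ^ (n + 2) - 2 : ℤ) : ZMod (M n)) := by
    rw [v]; push_cast; ring
  rw [hcast, ← Int.cast_pow, hz]
  push_cast
  linear_combination ((t : ZMod (M n))) * h0 n

lemma two_pow_n2_ne : (2 : ZMod (M n)) ^ (n + 2) ≠ 0 := by
  intro h
  have h2 : (((2:ℕ) ^ (n + 2) : ℕ) : ZMod (M n)) = 0 := by push_cast; exact h
  rw [ZMod.natCast_eq_zero_iff] at h2
  rw [show M n = 2 ^ (n + 3) from rfl] at h2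
  have hle := Nat.le_of_dvd (by positivity) h2
  have h3 : (2:ℕ) ^ (n + 2) < 2 ^ (n + 3) := by
    exact Nat.pow_lt_pow_right (by norm_num) (by omega)
  omega

lemma lcs_GG_ne : (⊤ : Subgroup (GG n)).lowerCentralSeries (n + 2) ≠ ⊥ := by
  intro hbot
  have hw := w_mem_lcs n (n + 2)
  rw [hbot, Subgroup.mem_bot] at hw
  have : ((v n - 1) ^ (n + 2)) = 0 := by
    have := congrArg (fun g : GG n => (g.1).left.toAdd) hw
    simpa [w, P] using this
  rw [vm1_pow_n2] at this
  exact two_pow_n2_ne n this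

/-! ### Automorphisms -/

/-- The order-3 automorphism of the Klein four group. -/
def ρ : V ≃* V where
  toFun p := (p.2, p.1 * p.2)
  invFun p := (p.1 * p.2, p.1)
  left_inv := by decide
  right_inv := by decide
  map_mul' := by decide

/-- The order-3 automorphism of `GG n`. -/
def τ : MulAut (GG n) := MulEquiv.prodCongr (MulEquiv.refl (SD n)) ρ

lemma τ_apply (x : GG n) : τ n x = (x.1, ρ x.2) := rfl

lemma τ_cube : (τ n) ^ 3 = 1 := by
  refine MulEquiv.ext fun x => ?_
  have h3 : ∀ p : V, ρ (ρ (ρ p)) = p := by decide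
  rw [pow_succ, pow_two, MulAut.mul_apply, MulAut.mul_apply, MulAut.one_apply,
    τ_apply, τ_apply, τ_apply]
  exact Prod.ext rfl (h3 x.2)

lemma τ_ne_one : (τ n) ≠ 1 := by
  intro h
  have h1 := congrArg (fun f : MulAut (GG n) => f ((1 : SD n), (ofAdd 1, 1))) h
  simp only [τ_apply, MulAut.one_apply] at h1
  have h2 : ρ ((ofAdd 1 : Multiplicative (ZMod 2)), (1 : Multiplicative (ZMod 2)))
      = ((ofAdd 1), 1) := congrArg Prod.snd h1
  exact absurd h2 (by decide)

lemma aut_GG_not_pgroup : ¬ IsPGroup 2 (MulAut (GG n)) := by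
  intro hp
  obtain ⟨k, hk⟩ := hp (τ n)
  have h3 : orderOf (τ n) = 3 := orderOf_eq_prime (τ_cube n) (τ_ne_one n)
  have hdvd : (3:ℕ) ∣ 2 ^ k := h3 ▸ orderOf_dvd_of_pow_eq_one hk
  have := Nat.Prime.dvd_of_dvd_pow (p := 3) (by norm_num) hdvd
  norm_num at this

/-! ### Transfer along the isomorphism -/

lemma lcs_bot_of_mulEquiv {G H : Type*} [Group G] [Group H] (e : G ≃* H) (m : ℕ)
    (h : (⊤ : Subgroup H).lowerCentralSeries m = ⊥) : (⊤ : Subgroup G).lowerCentralSeries m = ⊥ := by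
  rw [eq_bot_iff]
  intro x hx
  have hmem : e x ∈ Subgroup.map e.toMonoidHom ((⊤ : Subgroup G).lowerCentralSeries m) := ⟨x, hx, rfl⟩
  have h2 := lowerCentralSeries.map e.toMonoidHom m hmem
  rw [h, Subgroup.mem_bot] at h2
  have hx1 : x = 1 := by
    apply e.injective
    simpa using h2
  rw [hx1]
  exact Subgroup.one_mem _

end KModel


open KModel in
/-- For every `n ≥ 2`, the group `Kₙ^2` has order `2^(n+6)`, nilpotency class `n + 3`
(hence coclass `3`), and its automorphism group is not a `2`-group. -/
theorem K2_card_class_autNotPGroup (n : ℕ) (hn : 2 ≤ n) :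
    Nat.card (K2 n) = 2 ^ (n + 6) ∧
      (⊤ : Subgroup (K2 n)).lowerCentralSeries (n + 3) = ⊥ ∧
      (⊤ : Subgroup (K2 n)).lowerCentralSeries (n + 2) ≠ ⊥ ∧
      ¬ IsPGroup 2 (MulAut (K2 n)) := by
  refine ⟨?_, ?_, ?_, ?_⟩
  · rw [Nat.card_congr (isoKG n).toEquiv, card_GG]
  · exact lcs_bot_of_mulEquiv (isoKG n) _ (lcs_GG_bot n)
  · intro h
    exact lcs_GG_ne n (lcs_bot_of_mulEquiv (isoKG n).symm _ h)
  · intro h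
    exact aut_GG_not_pgroup n (h.of_equiv (MulAut.congr (isoKG n)))
end

section
/- For every natural number k ≥ 2, the automorphism group of the dihedral group of order 2^{k+1} (DihedralGroup (2^k) in Mathlib, which has order 2·2^k) is a 2-group. -/
open DihedralGroup

private lemma dihedral_aut_r {n : ℕ} [NeZero n] (ψ : MulAut (DihedralGroup n))
    {u : ZMod n} (h : ψ (r 1) = r u) (j : ZMod n) : ψ (r j) = r (u * j) := by
  have hj : (r j : DihedralGroup n) = r 1 ^ j.val := by
    rw [r_one_pow, ZMod.natCast_zmod_val]
  have hu : (r u : DihedralGroup n) = r 1 ^ u.val := by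
    rw [r_one_pow, ZMod.natCast_zmod_val]
  rw [hj, map_pow, h, hu, ← pow_mul, r_one_pow]
  congr 1
  push_cast
  rw [ZMod.natCast_zmod_val, ZMod.natCast_zmod_val]

private lemma dihedral_aut_pow_r {n : ℕ} [NeZero n] (ψ : MulAut (DihedralGroup n))
    {u : ZMod n} (h : ψ (r 1) = r u) (m : ℕ) : (ψ ^ m) (r 1) = r (u ^ m) := by
  induction m with
  | zero => simp
  | succ m ih =>
    rw [pow_succ', MulAut.mul_apply, ih, dihedral_aut_r ψ h, pow_succ, mul_comm]

private lemma dihedral_aut_ext {n : ℕ} [NeZero n] (ψ : MulAut (DihedralGroup n))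
    (h1 : ψ (r 1) = r 1) (h2 : ψ (sr 0) = sr 0) : ψ = 1 := by
  ext x
  have hr : ∀ j : ZMod n, ψ (r j) = r j := by
    intro j
    rw [dihedral_aut_r ψ h1 j, one_mul]
  cases x with
  | r j => simpa using hr j
  | sr j =>
    have : (sr j : DihedralGroup n) = sr 0 * r j := by rw [sr_mul_r, zero_add]
    simp only [MulAut.one_apply]
    rw [this, map_mul, h2, hr j]

/-- For every `k ≥ 2`, the automorphism group of the dihedral group of order `2 ^ (k + 1)`
is a `2`-group. -/
theorem aut_dihedralGroup_isPGroup (k : ℕ) (hk : 2 ≤ k) :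
    IsPGroup 2 (MulAut (DihedralGroup (2 ^ k))) := by
  haveI : NeZero (2 ^ k) := ⟨pow_ne_zero k two_ne_zero⟩
  intro φ
  refine ⟨(k - 1) + k, ?_⟩
  -- Step 1: φ (r 1) = r u for a unit u
  obtain ⟨u, hu⟩ : ∃ u : ZMod (2 ^ k), φ (r 1) = r u := by
    cases h : φ (r 1) with
    | r u => exact ⟨u, rfl⟩
    | sr i =>
      have ho : orderOf (φ (r 1)) = orderOf (r 1 : DihedralGroup (2 ^ k)) :=
        orderOf_injective φ.toMonoidHom φ.injective _
      rw [h, orderOf_sr, orderOf_r_one] at ho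
      have : 2 ^ 2 ≤ 2 ^ k := Nat.pow_le_pow_right (by norm_num) hk
      omega
  have hord : orderOf (r u : DihedralGroup (2 ^ k)) = 2 ^ k := by
    have ho : orderOf (φ (r 1)) = orderOf (r 1 : DihedralGroup (2 ^ k)) :=
      orderOf_injective φ.toMonoidHom φ.injective _
    rw [hu, orderOf_r_one] at ho
    exact ho
  have hunit : IsUnit u := by
    rw [orderOf_r] at hord
    have hg : Nat.gcd (2 ^ k) u.val ∣ 2 ^ k := Nat.gcd_dvd_left _ _
    have hpos : 0 < 2 ^ k := Nat.pow_pos (by norm_num)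
    have hg1 : Nat.gcd (2 ^ k) u.val = 1 := by
      have hgpos : 0 < Nat.gcd (2 ^ k) u.val := Nat.gcd_pos_of_pos_left _ hpos
      have hmc := Nat.div_mul_cancel hg
      rw [hord] at hmc
      nlinarith
    have := (ZMod.isUnit_iff_coprime u.val (2 ^ k)).mpr (Nat.coprime_comm.mp hg1)
    rwa [ZMod.natCast_zmod_val] at this
  obtain ⟨U, hU⟩ := hunit
  -- u ^ (2 ^ (k-1)) = 1
  have hUpow : u ^ (2 ^ (k - 1)) = 1 := by
    have ht := ZMod.pow_totient U
    rw [Nat.totient_prime_pow Nat.prime_two (by omega)] at ht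
    have h2 : (2 : ℕ) - 1 = 1 := rfl
    rw [h2, mul_one] at ht
    calc u ^ (2 ^ (k - 1)) = ((U : ZMod (2 ^ k))) ^ (2 ^ (k - 1)) := by rw [hU]
    _ = ((U ^ (2 ^ (k - 1)) : (ZMod (2 ^ k))ˣ) : ZMod (2 ^ k)) := by push_cast; ring
    _ = 1 := by rw [ht, Units.val_one]
  set ψ := φ ^ (2 ^ (k - 1)) with hψ
  have hψr : ψ (r 1) = r 1 := by
    rw [hψ, dihedral_aut_pow_r φ hu, hUpow]
  -- ψ fixes all rotations
  have hψrall : ∀ j : ZMod (2 ^ k), ψ (r j) = r j := by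
    intro j; rw [dihedral_aut_r ψ hψr j, one_mul]
  -- Step 3: ψ (sr 0) = sr b
  obtain ⟨b, hb⟩ : ∃ b : ZMod (2 ^ k), ψ (sr 0) = sr b := by
    cases h : ψ (sr 0) with
    | r c =>
      exfalso
      have : ψ (sr 0) = ψ (r c) := by rw [h, hψrall]
      exact absurd (ψ.injective this) (by simp)
    | sr b => exact ⟨b, rfl⟩
  -- Step 4: ψ ^ m maps sr 0 to sr (m * b)
  have hψpow : ∀ m : ℕ, (ψ ^ m) (sr 0) = sr ((m : ZMod (2 ^ k)) * b) := by
    intro m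
    induction m with
    | zero => simp
    | succ m ih =>
      rw [pow_succ', MulAut.mul_apply, ih]
      have hsr : (sr ((m : ZMod (2 ^ k)) * b) : DihedralGroup (2 ^ k)) =
          sr 0 * r ((m : ZMod (2 ^ k)) * b) := by rw [sr_mul_r, zero_add]
      rw [hsr, map_mul, hb, hψrall, sr_mul_r]
      congr 1
      push_cast
      ring
  have hψfin : ψ ^ (2 ^ k) = 1 := by
    apply dihedral_aut_ext
    · rw [dihedral_aut_pow_r ψ hψr, one_pow]
    · rw [hψpow, ZMod.natCast_self, zero_mul]
  rw [pow_add, pow_mul, ← hψ, hψfin]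
end

section
/- For every natural number k ≥ 2, the automorphism group of the generalized quaternion group of order 2^{k+2} (QuaternionGroup (2^k) in Mathlib, which has order 4·2^k) is a 2-group. -/
open QuaternionGroup

private lemma aux_map_a {n : ℕ} [NeZero n] (φ : MulAut (QuaternionGroup n)) (i : ZMod (2 * n))
    (h : φ (a 1) = a i) (x : ZMod (2 * n)) : φ (a x) = a (i * x) := by
  haveI : NeZero (2 * n) := ⟨by have := NeZero.pos n; omega⟩
  have hx : (a x : QuaternionGroup n) = a 1 ^ x.val := by
    rw [a_one_pow, ZMod.natCast_zmod_val]
  have hi : (a i : QuaternionGroup n) = a 1 ^ i.val := by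
    rw [a_one_pow, ZMod.natCast_zmod_val]
  rw [hx, map_pow, h, hi, ← pow_mul, a_one_pow]
  congr 1
  push_cast [ZMod.natCast_zmod_val]
  ring

private lemma aux_struct {n : ℕ} [NeZero n] (h4 : 4 < 2 * n)
    (φ : MulAut (QuaternionGroup n)) :
    ∃ i j : ZMod (2 * n), IsUnit i ∧ φ (a 1) = a i ∧ φ (xa 0) = xa j := by
  haveI : NeZero (2 * n) := ⟨by have := NeZero.pos n; omega⟩
  have hord : orderOf (φ (a 1)) = 2 * n := by
    have h := orderOf_injective φ.toMonoidHom φ.injective (a 1)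
    simp only [MulEquiv.coe_toMonoidHom] at h
    rw [h, orderOf_a_one]
  cases hφa : φ (a 1) with
  | xa i =>
    rw [hφa, orderOf_xa] at hord
    omega
  | a i =>
    rw [hφa, orderOf_a] at hord
    have hg : Nat.gcd (2 * n) i.val = 1 := by
      rcases Nat.div_eq_self.mp hord with h | h
      · omega
      · exact h
    have hu : IsUnit i := by
      rw [← ZMod.natCast_zmod_val i]
      exact (ZMod.isUnit_iff_coprime _ _).mpr (Nat.Coprime.symm hg)
    cases hφx : φ (xa 0) with
    | xa j => exact ⟨i, j, hu, rfl, rfl⟩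
    | a m =>
      exfalso
      obtain ⟨u, hui⟩ := hu
      have h2 : φ (a ((↑u⁻¹ : ZMod (2 * n)) * m)) = a m := by
        rw [aux_map_a φ i hφa, ← mul_assoc, ← hui, ← Units.val_mul, mul_inv_cancel,
          Units.val_one, one_mul]
      have h3 : (xa 0 : QuaternionGroup n) = a ((↑u⁻¹ : ZMod (2 * n)) * m) :=
        φ.injective (by rw [h2, hφx])
      cases h3

/-- For every `k ≥ 2`, the automorphism group of the generalized quaternion group of order
`2 ^ (k + 2)` is a `2`-group. -/
theorem aut_quaternionGroup_isPGroup (k : ℕ) (hk : 2 ≤ k) :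
    IsPGroup 2 (MulAut (QuaternionGroup (2 ^ k))) := by
  haveI : NeZero ((2 : ℕ) ^ k) := ⟨pow_ne_zero k two_ne_zero⟩
  haveI : NeZero (2 * 2 ^ k) := ⟨by positivity⟩
  have h4 : 4 < 2 * 2 ^ k := by
    have : (2 : ℕ) ^ 2 ≤ 2 ^ k := Nat.pow_le_pow_right (by norm_num) hk
    omega
  intro σ
  refine ⟨2 * k + 1, ?_⟩
  obtain ⟨i, j, hu, ha, hx⟩ := aux_struct h4 σ
  -- i ^ 2^k = 1
  obtain ⟨u, hui⟩ := hu
  have hcard : Fintype.card (ZMod (2 * 2 ^ k))ˣ = 2 ^ k := by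
    rw [ZMod.card_units_eq_totient]
    have h2 : 2 * 2 ^ k = 2 ^ (k + 1) := by ring
    rw [h2, Nat.totient_prime_pow Nat.prime_two (Nat.succ_pos k)]
    simp
  have hupow : u ^ 2 ^ k = 1 := by
    have h : u ^ Fintype.card (ZMod (2 * 2 ^ k))ˣ = 1 := pow_card_eq_one
    rwa [hcard] at h
  have hipow : i ^ 2 ^ k = 1 := by
    rw [← hui, ← Units.val_pow_eq_pow_val, hupow, Units.val_one]
  have hpow : ∀ (m : ℕ) (x : ZMod (2 * 2 ^ k)), (σ ^ m) (a x) = a (i ^ m * x) := by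
    intro m
    induction m with
    | zero => intro x; simp [MulAut.one_apply]
    | succ m IH =>
      intro x
      rw [pow_succ, MulAut.mul_apply, aux_map_a σ i ha x, IH]
      congr 1
      ring
  set τ := σ ^ 2 ^ k with hτ
  have hτa : ∀ x : ZMod (2 * 2 ^ k), τ (a x) = a x := by
    intro x
    rw [hτ, hpow, hipow, one_mul]
  obtain ⟨i', s, hu', ha', hx'⟩ := aux_struct h4 τ
  have hτra : ∀ (r : ℕ) (x : ZMod (2 * 2 ^ k)), (τ ^ r) (a x) = a x := by
    intro r
    induction r with
    | zero => intro x; simp [MulAut.one_apply]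
    | succ r IH => intro x; rw [pow_succ, MulAut.mul_apply, hτa, IH]
  have hτx : ∀ (r : ℕ) (y : ZMod (2 * 2 ^ k)), (τ ^ r) (xa y) = xa ((r : ZMod (2 * 2 ^ k)) * s + y) := by
    intro r
    induction r with
    | zero => intro y; simp [MulAut.one_apply]
    | succ r IH =>
      intro y
      have hstep : τ (xa y) = xa (s + y) := by
        have hy : (xa y : QuaternionGroup (2 ^ k)) = xa 0 * a y := by
          rw [xa_mul_a, zero_add]
        rw [hy, map_mul, hx', hτa, xa_mul_a]
      rw [pow_succ, MulAut.mul_apply, hstep, IH]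
      congr 1
      push_cast
      ring
  have hfin : τ ^ (2 * 2 ^ k) = 1 := by
    apply MulEquiv.ext
    intro g
    rw [MulAut.one_apply]
    cases g with
    | a x => exact hτra _ x
    | xa y =>
      rw [hτx]
      congr 1
      rw [ZMod.natCast_self, zero_mul, zero_add]
  have hsplit : (2 : ℕ) ^ (2 * k + 1) = 2 ^ k * (2 * 2 ^ k) := by ring
  rw [hsplit, pow_mul, ← hτ, hfin]
end
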